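/- arXiv:1508.00138 — 5 statements merged into one kernel-verified Lean document; each statement's English description precedes it below -/
import Mathlib

section
/- Let a ≠ 0, b ∈ ℝ, p ≥ 1, and define w_0(t) = 1 and for n ≥ 1, w_n(t) = Σ_{j=0}^{⌊(n-1)/p⌋} ((n+j-1)! b^j)/(j! (n-jp-1)! a^{n+j}) · t^{n-jp}. Then for all n ≥ 1, applying the operator Q = aD - bD^{p+1} (where D is differentiation) to w_n gives Q w_n(t) = n · w_{n-1}(t). -/
open Polynomial Finset

/-- The basic polynomials for the delta operator `aD - bD^(p+1)`. -/
noncomputable def w (a b : ℝ) (p : ℕ) (n : ℕ) (t : ℝ) : ℝ :=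
  if n = 0 then 1 else
    ∑ j ∈ Finset.range ((n - 1) / p + 1),
      ((n + j - 1).factorial * b ^ j) /
        (j.factorial * (n - j * p - 1).factorial * a ^ (n + j)) * t ^ (n - j * p)

/-- The coefficients of `w`. -/
noncomputable def wc (a b : ℝ) (p n j : ℕ) : ℝ :=
  ((n + j - 1).factorial * b ^ j) /
    (j.factorial * (n - j * p - 1).factorial * a ^ (n + j))

/-- `w` as a polynomial. -/
noncomputable def wP (a b : ℝ) (p n : ℕ) : Polynomial ℝ :=
  ∑ j ∈ Finset.range ((n - 1) / p + 1), C (wc a b p n j) * X ^ (n - j * p)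

lemma w_eq_eval (a b : ℝ) (p n : ℕ) (hn : n ≠ 0) :
    w a b p n = fun t => (wP a b p n).eval t := by
  funext t
  simp [w, wP, wc, hn, eval_finset_sum]

lemma iteratedDeriv_eval (P : Polynomial ℝ) (k : ℕ) :
    iteratedDeriv k (fun t => P.eval t) = fun t => (derivative^[k] P).eval t := by
  induction k generalizing P with
  | zero => simp
  | succ k ih =>
    rw [iteratedDeriv_succ',
      show (deriv fun t => eval t P) = fun t => eval t (derivative P) from
        funext fun x => Polynomial.deriv P,
      ih, Function.iterate_succ_apply]

lemma factorial_cast_ne (m : ℕ) : ((m.factorial : ℝ)) ≠ 0 :=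
  Nat.cast_ne_zero.mpr m.factorial_ne_zero

lemma keyA (a b : ℝ) (ha : a ≠ 0) (p : ℕ) (hp : 1 ≤ p) (n i : ℕ)
    (h : (i + 1) * p + 2 ≤ n) (t : ℝ) :
    a * (wc a b p n (i + 1) * (↑(n - (i + 1) * p) * t ^ (n - (i + 1) * p - 1))) -
      b * (wc a b p n i * (↑((n - i * p).descFactorial (p + 1)) * t ^ (n - i * p - (p + 1)))) =
    ↑n * (wc a b p (n - 1) (i + 1) * t ^ (n - 1 - (i + 1) * p)) := by
  have hq : (i + 1) * p = i * p + p := by ring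
  obtain ⟨k, rfl⟩ : ∃ k, n = (i + 1) * p + k + 2 := ⟨n - ((i + 1) * p + 2), by omega⟩
  simp only [wc]
  rw [show (i+1)*p + k + 2 - (i+1)*p - 1 = k + 1 from by omega,
      show (i+1)*p + k + 2 - (i+1)*p = k + 2 from by omega,
      show (i+1)*p + k + 2 - i*p - 1 = k + p + 1 from by omega,
      show (i+1)*p + k + 2 - i*p - (p+1) = k + 1 from by omega,
      show (i+1)*p + k + 2 - i*p = k + p + 2 from by omega,
      show (i+1)*p + k + 2 + (i+1) - 1 = ((i+1)*p + k + i + 1) + 1 from by omega,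
      show (i+1)*p + k + 2 + i - 1 = (i+1)*p + k + i + 1 from by omega,
      show (i+1)*p + k + 2 - 1 + (i+1) - 1 = (i+1)*p + k + i + 1 from by omega,
      show (i+1)*p + k + 2 - 1 - (i+1)*p - 1 = k from by omega,
      show (i+1)*p + k + 2 - 1 - (i+1)*p = k + 1 from by omega,
      show (i+1)*p + k + 2 + (i+1) = ((i+1)*p + k + i + 2) + 1 from by omega,
      show (i+1)*p + k + 2 + i = (i+1)*p + k + i + 2 from by omega,
      show (i+1)*p + k + 2 - 1 + (i+1) = (i+1)*p + k + i + 2 from by omega]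
  have hdf : (((k + p + 2).descFactorial (p + 1) : ℝ)) =
      ((k + p + 2).factorial : ℝ) / ((k + 1).factorial : ℝ) := by
    have h2 := Nat.factorial_mul_descFactorial (show p + 1 ≤ k + p + 2 from by omega)
    rw [show k + p + 2 - (p + 1) = k + 1 from by omega] at h2
    field_simp
    exact_mod_cast (mul_comm _ _).trans h2
  rw [hdf,
      Nat.factorial_succ ((i+1)*p + k + i + 1),
      show k + p + 2 = (k + p + 1) + 1 from by omega,
      Nat.factorial_succ (k + p + 1),
      Nat.factorial_succ k,
      Nat.factorial_succ i,
      pow_succ a ((i+1)*p + k + i + 2)]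
  have h1 := factorial_cast_ne ((i+1)*p + k + i + 1)
  have h2 := factorial_cast_ne (k + p + 1)
  have h3 := factorial_cast_ne k
  have h4 := factorial_cast_ne i
  have h5 : (a : ℝ) ^ ((i+1)*p + k + i + 2) ≠ 0 := pow_ne_zero _ ha
  push_cast
  field_simp
  ring

lemma keyB (a b : ℝ) (ha : a ≠ 0) (p : ℕ) (hp : 1 ≤ p) (n i : ℕ)
    (h : (i + 1) * p + 1 = n) (t : ℝ) :
    a * (wc a b p n (i + 1) * (↑(n - (i + 1) * p) * t ^ (n - (i + 1) * p - 1))) -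
      b * (wc a b p n i * (↑((n - i * p).descFactorial (p + 1)) * t ^ (n - i * p - (p + 1)))) =
    0 := by
  have hq : (i + 1) * p = i * p + p := by ring
  subst h
  simp only [wc]
  rw [show (i+1)*p + 1 - (i+1)*p - 1 = 0 from by omega,
      show (i+1)*p + 1 - (i+1)*p = 1 from by omega,
      show (i+1)*p + 1 - i*p - 1 = p from by omega,
      show (i+1)*p + 1 - i*p - (p+1) = 0 from by omega,
      show (i+1)*p + 1 - i*p = p + 1 from by omega,
      show (i+1)*p + 1 + (i+1) - 1 = ((i+1)*p + i) + 1 from by omega,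
      show (i+1)*p + 1 + i - 1 = (i+1)*p + i from by omega,
      show (i+1)*p + 1 + (i+1) = ((i+1)*p + 1 + i) + 1 from by omega]
  rw [Nat.descFactorial_self, Nat.factorial_succ ((i+1)*p + i),
      Nat.factorial_succ p, Nat.factorial_succ i, Nat.factorial_zero,
      pow_succ a ((i+1)*p + 1 + i)]
  have h1 := factorial_cast_ne ((i+1)*p + i)
  have h2 := factorial_cast_ne p
  have h3 := factorial_cast_ne i
  have h5 : (a : ℝ) ^ ((i+1)*p + 1 + i) ≠ 0 := pow_ne_zero _ ha
  push_cast
  field_simp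
  ring

lemma keyL0 (a b : ℝ) (ha : a ≠ 0) (p n : ℕ) (h : 2 ≤ n) (t : ℝ) :
    a * (wc a b p n 0 * (↑n * t ^ (n - 1))) =
    ↑n * (wc a b p (n - 1) 0 * t ^ (n - 1)) := by
  obtain ⟨m, rfl⟩ : ∃ m, n = m + 2 := ⟨n - 2, by omega⟩
  simp only [wc]
  rw [show m + 2 + 0 - 1 = m + 1 from by omega,
      show m + 2 - 0 * p - 1 = m + 1 from by omega,
      show m + 1 + 0 - 1 = m from by omega,
      show m + 1 - 0 * p - 1 = m from by omega,
      show m + 2 + 0 = (m + 1) + 1 from by omega,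
      show m + 1 + 0 = m + 1 from by omega]
  rw [pow_succ a (m + 1), Nat.factorial_zero]
  have h1 := factorial_cast_ne (m + 1)
  have h3 := factorial_cast_ne m
  have h5 : (a : ℝ) ^ (m + 1) ≠ 0 := pow_ne_zero _ ha
  have h6 : ((m + 1).factorial : ℝ) = (m + 1) * m.factorial := by
    rw [Nat.factorial_succ]; push_cast; ring
  push_cast
  field_simp

theorem stmt_0 (a b : ℝ) (p : ℕ) (ha : a ≠ 0) (hp : 1 ≤ p) (n : ℕ) (hn : 1 ≤ n) (t : ℝ) :
    a * deriv (w a b p n) t - b * iteratedDeriv (p + 1) (w a b p n) t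
      = n * w a b p (n - 1) t := by
  have hp' : 0 < p := hp
  rw [w_eq_eval a b p n (by omega), iteratedDeriv_eval, Polynomial.deriv]
  simp only [wP, derivative_sum, derivative_C_mul, derivative_X_pow,
    iterate_derivative_sum, iterate_derivative_C_mul, iterate_derivative_X_pow_eq_C_mul,
    eval_finset_sum, eval_mul, eval_C, eval_pow, eval_X]
  rcases eq_or_lt_of_le hn with h1 | h2
  · -- n = 1
    subst h1
    rw [show (1 - 1) / p + 1 = 1 from by simp]
    rw [Finset.sum_range_one, Finset.sum_range_one]
    have hd : ((1 : ℕ) - 0 * p).descFactorial (p + 1) = 0 := by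
      rw [show (1 : ℕ) - 0 * p = 1 from by simp]
      exact Nat.descFactorial_eq_zero_iff_lt.mpr (by omega)
    simp [wc, w, hd]
    field_simp
    rw [show (1 : ℕ) - p = 0 from by omega]; simp
  · -- 2 ≤ n
    have h2n : 2 ≤ n := h2
    have hmod := Nat.div_add_mod (n - 1) p
    have hmlt : (n - 1) % p < p := Nat.mod_lt _ hp'
    have hc : p * ((n - 1) / p) = ((n - 1) / p) * p := mul_comm _ _
    have hdlast : (n - ((n - 1) / p) * p).descFactorial (p + 1) = 0 :=
      Nat.descFactorial_eq_zero_iff_lt.mpr (by omega)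
    rw [Finset.sum_range_succ'
      (fun x => wc a b p n x * (↑(n - x * p) * t ^ (n - x * p - 1))) ((n - 1) / p)]
    rw [Finset.sum_range_succ
      (fun x => wc a b p n x * (↑((n - x * p).descFactorial (p + 1)) * t ^ (n - x * p - (p + 1))))
      ((n - 1) / p)]
    rw [w_eq_eval a b p (n - 1) (by omega)]
    simp only [wP, eval_finset_sum, eval_mul, eval_C, eval_pow, eval_X]
    rw [Finset.mul_sum]
    rw [Finset.sum_range_succ'
      (fun j => (n : ℝ) * (wc a b p (n - 1) j * t ^ (n - 1 - j * p))) ((n - 1 - 1) / p)]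
    simp only [hdlast, Nat.cast_zero, zero_mul, mul_zero, add_zero, Nat.sub_zero]
    rw [mul_add, Finset.mul_sum, Finset.mul_sum, add_sub_right_comm,
      ← Finset.sum_sub_distrib]
    have hsucc := @Nat.succ_div (n - 2) p
    rw [show n - 2 + 1 = n - 1 from by omega] at hsucc
    have hS : (∑ x ∈ Finset.range ((n - 1) / p),
        (a * (wc a b p n (x + 1) * (↑(n - (x + 1) * p) * t ^ (n - (x + 1) * p - 1))) -
          b * (wc a b p n x *
            (↑((n - x * p).descFactorial (p + 1)) * t ^ (n - x * p - (p + 1)))))) =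
        ∑ x ∈ Finset.range ((n - 1 - 1) / p),
          (n : ℝ) * (wc a b p (n - 1) (x + 1) * t ^ (n - 1 - (x + 1) * p)) := by
      by_cases hdvd : p ∣ n - 1
      · have hJp : ((n - 1) / p) * p = n - 1 := Nat.div_mul_cancel hdvd
        have hJeq : (n - 1) / p = (n - 1 - 1) / p + 1 := by
          rw [show n - 1 - 1 = n - 2 from by omega]
          simp only [hdvd, if_true] at hsucc
          omega
        rw [hJeq, Finset.sum_range_succ]
        rw [keyB a b ha p hp n ((n - 1 - 1) / p) (by rw [← hJeq]; omega) t, add_zero]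
        refine Finset.sum_congr rfl fun x hx => ?_
        have hx' : x + 1 ≤ (n - 1 - 1) / p := Finset.mem_range.mp hx
        have hxp : (x + 1) * p ≤ n - 1 - 1 := (Nat.le_div_iff_mul_le hp').mp hx'
        exact keyA a b ha p hp n x (by omega) t
      · have hJeq : (n - 1) / p = (n - 1 - 1) / p := by
          rw [show n - 1 - 1 = n - 2 from by omega]
          simp only [hdvd, if_false] at hsucc
          omega
        rw [hJeq]
        refine Finset.sum_congr rfl fun x hx => ?_
        have hx' : x + 1 ≤ (n - 1 - 1) / p := Nat.succ_le_of_lt (Finset.mem_range.mp hx)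
        have hxp : (x + 1) * p ≤ n - 1 - 1 := (Nat.le_div_iff_mul_le hp').mp hx'
        exact keyA a b ha p hp n x (by omega) t
    rw [hS, keyL0 a b ha p n h2n t]
end

section
/- Let a ≠ 0, b ∈ ℝ, p ≥ 1, and let w_n(t) be defined by w_0(t)=1 and w_n(t) = Σ_{j=0}^{⌊(n-1)/p⌋} ((n+j-1)! b^j)/(j! (n-jp-1)! a^{n+j}) · t^{n-jp} for n ≥ 1. Then the sequence {w_n} is of binomial type: for all n ≥ 0 and all s, t ∈ ℝ, w_n(s+t) = Σ_{k=0}^n C(n,k) w_k(s) w_{n-k}(t). -/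
namespace BinomAux

open Polynomial Finset

noncomputable def c (a b : ℝ) (p n j : ℕ) : ℝ :=
  ((n + j - 1).factorial * b ^ j) / (j.factorial * (n - j * p - 1).factorial * a ^ (n + j))

noncomputable def W (a b : ℝ) (p n : ℕ) : Polynomial ℝ :=
  if n = 0 then 1 else
    ∑ j ∈ Finset.range ((n - 1) / p + 1), C (c a b p n j) * X ^ (n - j * p)

noncomputable def Q (a b : ℝ) (p : ℕ) : Module.End ℝ (Polynomial ℝ) :=
  a • (Polynomial.derivative : Polynomial ℝ →ₗ[ℝ] Polynomial ℝ)
    - b • (Polynomial.derivative : Polynomial ℝ →ₗ[ℝ] Polynomial ℝ) ^ (p + 1)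

variable {a b : ℝ} {p : ℕ}

lemma Q_apply (f : Polynomial ℝ) :
    Q a b p f = a • derivative f - b • derivative^[p + 1] f := by
  simp [Q, Module.End.pow_apply]

lemma eval_W (n : ℕ) (t : ℝ) : (W a b p n).eval t = w a b p n t := by
  unfold W w c
  split
  · simp
  · simp [eval_finset_sum]

lemma W_eval_zero (hp : 1 ≤ p) {n : ℕ} (hn : n ≠ 0) : (W a b p n).eval 0 = 0 := by
  unfold W
  rw [if_neg hn, eval_finset_sum]
  refine Finset.sum_eq_zero fun j hj => ?_
  have hj' : j ≤ (n - 1) / p := by simpa using Finset.mem_range_succ_iff.mp hj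
  have hjp : j * p ≤ n - 1 := (Nat.le_div_iff_mul_le hp).mp hj'
  have : n - j * p ≠ 0 := by omega
  simp [this]

lemma Q_one : Q a b p (1 : Polynomial ℝ) = 0 := by
  rw [Q_apply, Function.iterate_succ_apply]
  simp

lemma Q_CX (r : ℝ) (m : ℕ) :
    Q a b p (C r * X ^ m) =
      C (a * (r * m)) * X ^ (m - 1)
        - C (b * (r * ((m.descFactorial (p + 1) : ℕ) : ℝ))) * X ^ (m - (p + 1)) := by
  rw [Q_apply, derivative_C_mul, derivative_X_pow, iterate_derivative_C_mul,
    iterate_derivative_X_pow_eq_C_mul, smul_eq_C_mul, smul_eq_C_mul]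
  ring_nf
  rw [mul_comm]
  ring_nf
  simp [C_mul]
  ring

lemma Q_ker (ha : a ≠ 0) (hp : 1 ≤ p) {f : Polynomial ℝ}
    (h : Q a b p f = 0) (h0 : f.eval 0 = 0) : f = 0 := by
  by_cases hdeg : f.natDegree = 0
  · rw [eq_C_of_natDegree_eq_zero hdeg] at h0 ⊢
    simpa using h0
  · exfalso
    set d := f.natDegree with hd
    have hd1 : 1 ≤ d := by omega
    have hcoeff : (Q a b p f).coeff (d - 1) = 0 := by rw [h]; simp
    rw [Q_apply] at hcoeff
    have e1 : (derivative f).coeff (d - 1) = f.coeff d * d := by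
      rw [coeff_derivative]
      have : d - 1 + 1 = d := by omega
      rw [this, Nat.cast_sub hd1]
      push_cast
      ring
    have e2 : (derivative^[p + 1] f).coeff (d - 1) = 0 := by
      rw [coeff_iterate_derivative]
      have : f.coeff (d - 1 + (p + 1)) = 0 :=
        coeff_eq_zero_of_natDegree_lt (by omega)
      simp [this]
    rw [coeff_sub, coeff_smul, coeff_smul, e1, e2, smul_zero, sub_zero, smul_eq_mul] at hcoeff
    have hlead : f.coeff d ≠ 0 := by
      rw [hd]
      exact mt leadingCoeff_eq_zero.mp (fun hf => hdeg (by rw [hd, hf, natDegree_zero]))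
    have : (d : ℝ) ≠ 0 := Nat.cast_ne_zero.mpr (by omega)
    exact (mul_ne_zero ha (mul_ne_zero hlead this)) hcoeff

lemma iterate_derivative_comp_X_add_C (f : Polynomial ℝ) (t : ℝ) (k : ℕ) :
    derivative^[k] (f.comp (X + C t)) = (derivative^[k] f).comp (X + C t) := by
  induction k generalizing f with
  | zero => simp
  | succ k ih =>
    rw [Function.iterate_succ_apply, Function.iterate_succ_apply, ← ih, derivative_comp]
    simp

lemma Q_comp (f : Polynomial ℝ) (t : ℝ) :
    Q a b p (f.comp (X + C t)) = (Q a b p f).comp (X + C t) := by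
  rw [Q_apply, Q_apply, iterate_derivative_comp_X_add_C, sub_comp, smul_comp, smul_comp,
    derivative_comp]
  simp

lemma key (ha : a ≠ 0) (n j : ℕ) (hj : j * p + 1 ≤ n) :
    a * (c a b p (n + 1) j * ((n + 1 - j * p : ℕ) : ℝ))
      - (if j = 0 then 0 else
          b * (c a b p (n + 1) (j - 1) * (((n + 1 - (j - 1) * p).descFactorial (p + 1) : ℕ) : ℝ)))
      = ((n + 1 : ℕ) : ℝ) * c a b p n j := by
  rcases Nat.eq_zero_or_eq_succ_pred j with hj0 | hj1
  · subst hj0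
    rw [if_pos rfl, sub_zero]
    unfold c
    have e1 : n + 1 + 0 - 1 = n := by omega
    have e2 : 0 * p = 0 := by omega
    have e3 : n + 1 - 0 - 1 = n := by omega
    have e4 : n + 0 - 1 = n - 1 := by omega
    have e5 : n - 0 - 1 = n - 1 := by omega
    have e6 : n + 1 - 0 = n + 1 := by omega
    rw [e2, e1, e3, e4, e5, e6]
    have hf : ((n.factorial : ℕ) : ℝ) ≠ 0 := Nat.cast_ne_zero.mpr (Nat.factorial_ne_zero _)
    have hf2 : (((n - 1).factorial : ℕ) : ℝ) ≠ 0 := Nat.cast_ne_zero.mpr (Nat.factorial_ne_zero _)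
    have e7 : n + 1 + 0 = (n + 0) + 1 := by omega
    rw [e7, pow_succ, pow_zero]
    push_cast
    field_simp
    ring
  · obtain ⟨i, rfl⟩ : ∃ i, j = i + 1 := ⟨j - 1, hj1⟩
    rw [if_neg (Nat.succ_ne_zero i)]
    have hip : (i + 1) * p = i * p + p := by ring
    obtain ⟨m, rfl⟩ : ∃ m, n = (i + 1) * p + m + 1 := ⟨n - (i + 1) * p - 1, by omega⟩
    set N := (i + 1) * p + m + 1 with hN
    unfold c
    have e2 : i + 1 - 1 = i := by omega
    have e3 : N + 1 + (i + 1) - 1 = (i + 1) * p + m + i + 2 := by omega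
    have e4 : N + 1 - (i + 1) * p - 1 = m + 1 := by omega
    have e5 : N + 1 + i - 1 = (i + 1) * p + m + i + 1 := by omega
    have e6 : N + 1 - i * p - 1 = p + m + 1 := by omega
    have e7 : N + 1 - i * p = p + m + 2 := by omega
    have e8 : N + (i + 1) - 1 = (i + 1) * p + m + i + 1 := by omega
    have e9 : N - (i + 1) * p - 1 = m := by omega
    have e10 : N + 1 - (i + 1) * p = m + 2 := by omega
    have e11 : N + 1 + (i + 1) = ((i + 1) * p + m + i + 2) + 1 := by omega
    have e12 : N + 1 + i = (i + 1) * p + m + i + 2 := by omega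
    have e13 : N + (i + 1) = (i + 1) * p + m + i + 2 := by omega
    have e14 : N + 1 = (i + 1) * p + m + 2 := by omega
    rw [e2, e3, e4, e5, e6, e7, e8, e9, e10, e11, e12, e13, e14]
    have hdf : (((p + m + 2).descFactorial (p + 1) : ℕ) : ℝ)
        = ((p + m + 2).factorial : ℝ) / ((m + 1).factorial : ℝ) := by
      rw [eq_div_iff (Nat.cast_ne_zero.mpr (Nat.factorial_ne_zero _))]
      have h := Nat.factorial_mul_descFactorial (n := p + m + 2) (k := p + 1) (by omega)
      have e15 : p + m + 2 - (p + 1) = m + 1 := by omega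
      rw [e15] at h
      exact_mod_cast (by rw [mul_comm] at h; exact h)
    rw [hdf]
    have f1 : ((i + 1) * p + m + i + 2).factorial
        = ((i + 1) * p + m + i + 2) * ((i + 1) * p + m + i + 1).factorial := Nat.factorial_succ _
    have f2 : (m + 1).factorial = (m + 1) * m.factorial := Nat.factorial_succ m
    have f3 : (i + 1).factorial = (i + 1) * i.factorial := Nat.factorial_succ i
    have f4 : (p + m + 2).factorial = (p + m + 2) * (p + m + 1).factorial := Nat.factorial_succ _
    rw [f1, f2, f3, f4, pow_succ]
    have hfi : (i.factorial : ℝ) ≠ 0 := Nat.cast_ne_zero.mpr i.factorial_ne_zero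
    have hfm : (m.factorial : ℝ) ≠ 0 := Nat.cast_ne_zero.mpr m.factorial_ne_zero
    have hfpm : (((p + m + 1).factorial : ℕ) : ℝ) ≠ 0 :=
      Nat.cast_ne_zero.mpr (Nat.factorial_ne_zero _)
    have hfx : ((((i + 1) * p + m + i + 1).factorial : ℕ) : ℝ) ≠ 0 :=
      Nat.cast_ne_zero.mpr (Nat.factorial_ne_zero _)
    have hpow : a ^ ((i + 1) * p + m + i + 2) ≠ 0 := pow_ne_zero _ ha
    push_cast
    field_simp
    ring

lemma keytop (ha : a ≠ 0) (j : ℕ) (hj : 1 ≤ j) :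
    a * (c a b p (j * p + 1) j * ((j * p + 1 - j * p : ℕ) : ℝ))
      = b * (c a b p (j * p + 1) (j - 1) *
          (((j * p + 1 - (j - 1) * p).descFactorial (p + 1) : ℕ) : ℝ)) := by
  obtain ⟨i, rfl⟩ : ∃ i, j = i + 1 := ⟨j - 1, by omega⟩
  have hip : (i + 1) * p = i * p + p := by ring
  unfold c
  have e1 : (i + 1) * p + 1 - (i + 1) * p = 1 := by omega
  have e2 : i + 1 - 1 = i := by omega
  have e3 : (i + 1) * p + 1 + (i + 1) - 1 = (i + 1) * p + i + 1 := by omega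
  have e4 : (i + 1) * p + 1 - (i + 1) * p - 1 = 0 := by omega
  have e5 : (i + 1) * p + 1 + i - 1 = (i + 1) * p + i := by omega
  have e6 : (i + 1) * p + 1 - i * p - 1 = p := by omega
  have e7 : (i + 1) * p + 1 - i * p = p + 1 := by omega
  rw [e3, e4, e2, e5, e6, e7, e1, Nat.descFactorial_self]
  have f1 : ((i + 1) * p + i + 1).factorial
      = ((i + 1) * p + i + 1) * ((i + 1) * p + i).factorial := Nat.factorial_succ _
  have f2 : (i + 1).factorial = (i + 1) * i.factorial := Nat.factorial_succ i
  have f3 : (p + 1).factorial = (p + 1) * p.factorial := Nat.factorial_succ p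
  have f4 : (i + 1) * p + 1 + (i + 1) = ((i + 1) * p + 1 + i) + 1 := by omega
  rw [f1, f2, f3, Nat.factorial_zero, f4, pow_succ]
  have hfi : (i.factorial : ℝ) ≠ 0 := Nat.cast_ne_zero.mpr i.factorial_ne_zero
  have hfp : (p.factorial : ℝ) ≠ 0 := Nat.cast_ne_zero.mpr p.factorial_ne_zero
  have hfx : ((((i + 1) * p + i).factorial : ℕ) : ℝ) ≠ 0 :=
    Nat.cast_ne_zero.mpr (Nat.factorial_ne_zero _)
  have hpow : a ^ ((i + 1) * p + 1 + i) ≠ 0 := pow_ne_zero _ ha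
  push_cast
  field_simp
  ring

lemma Qw (ha : a ≠ 0) (hp : 1 ≤ p) (n : ℕ) :
    Q a b p (W a b p (n + 1)) = ((n + 1 : ℕ) : ℝ) • W a b p n := by
  classical
  have hp0 : 0 < p := hp
  have hmod := Nat.div_add_mod n p
  have hmlt : n % p < p := Nat.mod_lt n hp0
  have hW : W a b p (n + 1)
      = ∑ j ∈ Finset.range (n / p + 1), C (c a b p (n + 1) j) * X ^ (n + 1 - j * p) := by
    rw [W, if_neg (Nat.succ_ne_zero n)]
    norm_num
  rw [hW, map_sum]
  have hstep : ∀ j ∈ Finset.range (n / p + 1),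
      Q a b p (C (c a b p (n + 1) j) * X ^ (n + 1 - j * p))
        = C (a * (c a b p (n + 1) j * ((n + 1 - j * p : ℕ) : ℝ))) * X ^ (n - j * p)
          - C (b * (c a b p (n + 1) j * (((n + 1 - j * p).descFactorial (p + 1) : ℕ) : ℝ)))
              * X ^ (n - (j + 1) * p) := by
    intro j hj
    have hjp : j * p ≤ n :=
      le_trans (Nat.mul_le_mul_right p (Finset.mem_range_succ_iff.mp hj)) (Nat.div_mul_le_self n p)
    have e1 : n + 1 - j * p - 1 = n - j * p := by omega
    have e2 : n + 1 - j * p - (p + 1) = n - (j + 1) * p := by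
      have h3 : (j + 1) * p = j * p + p := by ring
      omega
    rw [Q_CX, e1, e2]
  rw [Finset.sum_congr rfl hstep, Finset.sum_sub_distrib]
  have hS2 : ∑ j ∈ Finset.range (n / p + 1),
      C (b * (c a b p (n + 1) j * (((n + 1 - j * p).descFactorial (p + 1) : ℕ) : ℝ)))
        * X ^ (n - (j + 1) * p)
      = ∑ j ∈ Finset.range (n / p + 1),
        C (if j = 0 then 0 else
            b * (c a b p (n + 1) (j - 1)
              * (((n + 1 - (j - 1) * p).descFactorial (p + 1) : ℕ) : ℝ))) * X ^ (n - j * p) := by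
    have hlt : n + 1 - n / p * p < p + 1 := by
      have h1 : n / p * p ≤ n := Nat.div_mul_le_self n p
      have h2 : n / p * p = p * (n / p) := Nat.mul_comm _ _
      omega
    rw [Finset.sum_range_succ, Nat.descFactorial_eq_zero_iff_lt.mpr hlt, Finset.sum_range_succ']
    simp only [Nat.cast_zero, mul_zero, map_zero, zero_mul, add_zero, if_pos rfl,
      Nat.succ_ne_zero, if_false, Nat.add_sub_cancel]
    simp
  rw [hS2, ← Finset.sum_sub_distrib]
  have hcomb : ∀ j ∈ Finset.range (n / p + 1),
      C (a * (c a b p (n + 1) j * ((n + 1 - j * p : ℕ) : ℝ))) * X ^ (n - j * p)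
        - C (if j = 0 then 0 else
            b * (c a b p (n + 1) (j - 1)
              * (((n + 1 - (j - 1) * p).descFactorial (p + 1) : ℕ) : ℝ))) * X ^ (n - j * p)
      = C (a * (c a b p (n + 1) j * ((n + 1 - j * p : ℕ) : ℝ))
          - if j = 0 then 0 else
            b * (c a b p (n + 1) (j - 1)
              * (((n + 1 - (j - 1) * p).descFactorial (p + 1) : ℕ) : ℝ))) * X ^ (n - j * p) := by
    intro j hj
    rw [C_sub, sub_mul]
  rw [Finset.sum_congr rfl hcomb]
  cases n with
  | zero =>
    have hW0 : W a b p 0 = 1 := if_pos rfl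
    rw [hW0]
    have : (0 : ℕ) / p = 0 := Nat.zero_div p
    rw [this]
    rw [Finset.sum_range_one]
    simp only [if_pos rfl, sub_zero, Nat.zero_sub, Nat.zero_mul, Nat.sub_zero, pow_zero, mul_one]
    have hc : c a b p 1 0 = 1 / a := by
      simp [c]
    rw [hc]
    simp only [if_true, Nat.cast_one, Nat.cast_ofNat, sub_zero]
    norm_num
    rw [← C_mul, mul_inv_cancel₀ ha, map_one]
  | succ m =>
    have hWm : W a b p (m + 1)
        = ∑ j ∈ Finset.range (m / p + 1), C (c a b p (m + 1) j) * X ^ (m + 1 - j * p) := by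
      rw [W, if_neg (Nat.succ_ne_zero m)]
      norm_num
    rw [hWm, Finset.smul_sum]
    have hsm : ∀ j ∈ Finset.range (m / p + 1),
        ((m + 1 + 1 : ℕ) : ℝ) • (C (c a b p (m + 1) j) * X ^ (m + 1 - j * p))
          = C (((m + 1 + 1 : ℕ) : ℝ) * c a b p (m + 1) j) * X ^ (m + 1 - j * p) := by
      intro j hj
      rw [smul_eq_C_mul, ← mul_assoc, ← C_mul]
    rw [Finset.sum_congr rfl hsm]
    by_cases hdvd : (m + 1) / p = m / p
    · rw [hdvd]
      refine Finset.sum_congr rfl fun j hj => ?_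
      have hjp : j * p ≤ m :=
        le_trans (Nat.mul_le_mul_right p (Finset.mem_range_succ_iff.mp hj))
          (Nat.div_mul_le_self m p)
      congr 1
      exact congrArg C (key (p := p) (b := b) ha (m + 1) j (by omega))
    · have hsd := Nat.succ_div (a := m) (b := p)
      have hdvd' : p ∣ (m + 1) := by
        by_contra hnd
        rw [if_neg hnd] at hsd
        omega
      have h1 : (m + 1) / p = m / p + 1 := by rw [hsd, if_pos hdvd']
      have hJp : (m / p + 1) * p = m + 1 := by
        rw [← h1]
        exact Nat.div_mul_cancel hdvd'
      rw [h1, Finset.sum_range_succ]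
      have htopz : C (a * (c a b p (m + 1 + 1) (m / p + 1)
              * ((m + 1 + 1 - (m / p + 1) * p : ℕ) : ℝ))
          - if m / p + 1 = 0 then 0 else
            b * (c a b p (m + 1 + 1) (m / p + 1 - 1)
              * (((m + 1 + 1 - (m / p + 1 - 1) * p).descFactorial (p + 1) : ℕ) : ℝ)))
          = 0 := by
        rw [if_neg (Nat.succ_ne_zero _)]
        have hn2 : m + 1 + 1 = (m / p + 1) * p + 1 := by omega
        rw [hn2]
        rw [keytop (p := p) (b := b) ha (m / p + 1) (Nat.le_add_left 1 (m / p))]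
        simp
      rw [htopz, zero_mul, add_zero]
      refine Finset.sum_congr rfl fun j hj => ?_
      have hjp : j * p ≤ m :=
        le_trans (Nat.mul_le_mul_right p (Finset.mem_range_succ_iff.mp hj))
          (Nat.div_mul_le_self m p)
      congr 1
      exact congrArg C (key (p := p) (b := b) ha (m + 1) j (by omega))

lemma main (ha : a ≠ 0) (hp : 1 ≤ p) (n : ℕ) (t : ℝ) :
    (W a b p n).comp (X + C t)
      = ∑ k ∈ Finset.range (n + 1),
          ((n.choose k : ℝ) * (W a b p (n - k)).eval t) • W a b p k := by
  induction n with
  | zero => simp [W]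
  | succ n ih =>
    set L := (W a b p (n + 1)).comp (X + C t) with hL
    set R := ∑ k ∈ Finset.range (n + 2),
        (((n + 1).choose k : ℝ) * (W a b p (n + 1 - k)).eval t) • W a b p k with hR
    have hQL : Q a b p L = ((n + 1 : ℕ) : ℝ) • ((W a b p n).comp (X + C t)) := by
      rw [hL, Q_comp, Qw ha hp, smul_comp]
    have hQR : Q a b p R = ((n + 1 : ℕ) : ℝ) •
        ∑ k ∈ Finset.range (n + 1),
          ((n.choose k : ℝ) * (W a b p (n - k)).eval t) • W a b p k := by
      rw [hR, map_sum]
      rw [Finset.sum_range_succ']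
      simp only [map_smul]
      have hW0 : W a b p 0 = 1 := if_pos rfl
      rw [hW0, Q_one]
      simp only [smul_zero, add_zero]
      rw [Finset.smul_sum]
      refine Finset.sum_congr rfl fun k hk => ?_
      rw [Qw ha hp k]
      rw [smul_smul, smul_smul]
      congr 1
      have hch : (n + 1).choose (k + 1) * (k + 1) = (n + 1) * n.choose k :=
        (Nat.add_one_mul_choose_eq n k).symm
      have : n + 1 - (k + 1) = n - k := by omega
      rw [this]
      have hchR : (((n + 1).choose (k + 1) : ℕ) : ℝ) * ((k : ℝ) + 1)
          = ((n : ℝ) + 1) * ((n.choose k : ℕ) : ℝ) := by exact_mod_cast hch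
      push_cast
      linear_combination Polynomial.eval t (W a b p (n - k)) * hchR
    have hF : Q a b p (L - R) = 0 := by
      rw [map_sub, hQL, hQR, ih, sub_self]
    have h0 : (L - R).eval 0 = 0 := by
      rw [eval_sub, hL, hR, eval_comp]
      simp only [eval_add, eval_X, eval_C, zero_add]
      rw [eval_finset_sum]
      rw [Finset.sum_eq_single 0]
      · simp [W]
      · intro k hk hk0
        rw [eval_smul, W_eval_zero hp hk0, smul_zero]
      · simp
    have := Q_ker ha hp hF h0
    have : L = R := by linear_combination (norm := abel) this
    exact this

end BinomAux

theorem stmt_1 (a b : ℝ) (p : ℕ) (ha : a ≠ 0) (hp : 1 ≤ p) (n : ℕ) (s t : ℝ) :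
    w a b p n (s + t)
      = ∑ k ∈ Finset.range (n + 1), (n.choose k : ℝ) * w a b p k s * w a b p (n - k) t := by
  have h := congrArg (Polynomial.eval s) (BinomAux.main (a := a) (b := b) (p := p) ha hp n t)
  rw [Polynomial.eval_comp] at h
  simp only [Polynomial.eval_add, Polynomial.eval_X, Polynomial.eval_C] at h
  rw [BinomAux.eval_W] at h
  rw [Polynomial.eval_finset_sum] at h
  rw [h]
  refine Finset.sum_congr rfl fun k hk => ?_
  rw [Polynomial.eval_smul, BinomAux.eval_W, BinomAux.eval_W, smul_eq_mul]
  ring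
end

section
/- Let a ≠ 0, b ∈ ℝ, p ≥ 1, g(x) = ax − bx^{p+1}, and let f be the formal power series compositional inverse of g. Then a·f(x)/x = B_{p+1}(b x^p / a^{p+1}) as formal power series, where B_{p+1} is the Fuss–Catalan generating function of order p+1; equivalently f(x) = (x/a) · B_{p+1}(b x^p / a^{p+1}). -/
open PowerSeries Finset

noncomputable def fcT (q n s : ℕ) : ℝ :=
  if n = 0 then 1 else (s : ℝ) / (q * n + s) * ((q * n + s).choose n)

lemma fcT_zero (q s : ℕ) : fcT q 0 s = 1 := if_pos rfl

lemma fcT_s_zero (q : ℕ) {n : ℕ} (hn : n ≠ 0) : fcT q n 0 = 0 := by simp [fcT, hn]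

lemma raney {q : ℕ} (hq : 2 ≤ q) (m s : ℕ) :
    fcT q (m + 1) (s + 1) = fcT q (m + 1) s + fcT q m (s + q) := by
  have hqR : (2:ℝ) ≤ (q:ℝ) := by exact_mod_cast hq
  have hM : m + 1 ≤ q * (m + 1) + s := by nlinarith
  have key : ((m : ℝ) + 1) * ((q * (m + 1) + s).choose (m + 1)) =
      (((q * (m + 1) + s : ℕ) : ℝ) - m) * ((q * (m + 1) + s).choose m) := by
    have h := Nat.choose_succ_right_eq (q * (m + 1) + s) m
    have hle : m ≤ q * (m + 1) + s := by omega
    have hcast : ((q * (m + 1) + s - m : ℕ) : ℝ) = ((q * (m + 1) + s : ℕ) : ℝ) - m := by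
      push_cast [Nat.cast_sub hle]; ring
    calc ((m : ℝ) + 1) * ((q * (m + 1) + s).choose (m + 1))
        = (((q * (m + 1) + s).choose (m + 1) * (m + 1) : ℕ) : ℝ) := by push_cast; ring
      _ = (((q * (m + 1) + s).choose m * (q * (m + 1) + s - m) : ℕ) : ℝ) := by rw [h]
      _ = _ := by push_cast [hcast]; ring
  have pascal : ((q * (m + 1) + s + 1).choose (m + 1) : ℝ) =
      ((q * (m + 1) + s).choose (m + 1) : ℝ) + ((q * (m + 1) + s).choose m : ℝ) := by
    rw [Nat.choose_succ_succ']; push_cast; ring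
  have hN0 : (0:ℝ) < (q : ℝ) * (m + 1) + s := by nlinarith
  have h3 : fcT q m (s + q) =
      ((s : ℝ) + q) / ((q:ℝ) * (m + 1) + s) * ((q * (m + 1) + s).choose m) := by
    rcases Nat.eq_zero_or_pos m with rfl | hm
    · simp only [fcT, if_pos rfl, if_true, Nat.choose_zero_right, Nat.cast_one, mul_one]
      rw [eq_comm, div_eq_one_iff_eq hN0.ne']
      push_cast; ring
    · have hqm : q * m + (s + q) = q * (m + 1) + s := by ring
      simp only [fcT, if_neg hm.ne']
      rw [hqm]
      push_cast; ring_nf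
  rw [h3]
  simp only [fcT, Nat.succ_ne_zero, if_neg, ite_false]
  have e1 : (q:ℝ) * ↑(m+1) + ↑(s+1) = ((q:ℝ) * (m+1) + s) + 1 := by push_cast; ring
  have e2 : q * (m+1) + (s+1) = (q * (m+1) + s) + 1 := by ring
  have e3 : ((q * (m + 1) + s : ℕ) : ℝ) = (q:ℝ) * (m+1) + s := by push_cast; ring
  rw [e1, e2, pascal]
  rw [e3] at key
  have hN1 : ((q : ℝ) * (m + 1) + s) + 1 ≠ 0 := by nlinarith
  push_cast
  field_simp
  linear_combination (q:ℝ) * key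

variable {q : ℕ}

lemma fcT_split (s : ℕ) (k t : ℕ) :
    (∑ ij ∈ Finset.HasAntidiagonal.antidiagonal (k+1), fcT q ij.1 s * fcT q ij.2 t) =
      fcT q (k+1) s * fcT q 0 t +
        ∑ ij ∈ Finset.HasAntidiagonal.antidiagonal k, fcT q ij.1 s * fcT q (ij.2 + 1) t := by
  rw [Finset.Nat.antidiagonal_succ', Finset.sum_cons, Finset.sum_map]
  rfl

lemma fcT_conv (hq : 2 ≤ q) : ∀ k s t : ℕ,
    (∑ ij ∈ Finset.HasAntidiagonal.antidiagonal k, fcT q ij.1 s * fcT q ij.2 t) = fcT q k (s + t) := by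
  intro k
  induction k with
  | zero => intro s t; simp [fcT_zero]
  | succ k IH =>
    intro s t
    induction t with
    | zero =>
      rw [fcT_split, fcT_zero, mul_one]
      have : ∀ ij ∈ Finset.HasAntidiagonal.antidiagonal k, fcT q ij.1 s * fcT q (ij.2 + 1) 0 = 0 := by
        intro ij _; rw [fcT_s_zero q (Nat.succ_ne_zero _), mul_zero]
      rw [Finset.sum_congr rfl this, Finset.sum_const_zero, add_zero]
      norm_num
    | succ t iht =>
      rw [fcT_split]
      have step : ∀ ij ∈ Finset.HasAntidiagonal.antidiagonal k, fcT q ij.1 s * fcT q (ij.2 + 1) (t + 1)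
          = fcT q ij.1 s * fcT q (ij.2 + 1) t + fcT q ij.1 s * fcT q ij.2 (t + q) := by
        intro ij _; rw [raney hq, mul_add]
      rw [Finset.sum_congr rfl step, Finset.sum_add_distrib, ← add_assoc]
      have h0 : fcT q 0 (t + 1) = fcT q 0 t := by rw [fcT_zero, fcT_zero]
      rw [h0, ← fcT_split, iht, IH s (t + q)]
      have e : s + (t + 1) = (s + t) + 1 := by ring
      rw [e, raney hq]
      congr 2
      omega

/-- Power series with coefficient of `x^m` equal to the coefficient of `x^m` in
`B_{p+1}(b x^p / a^{p+1})`, where `B_{p+1}` is the Fuss–Catalan generating function of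
order `p+1`: only exponents `m = n*p` contribute, with coefficient
`Fuss(n) * b^n / a^{(p+1)*n}`. -/
noncomputable def fussComposed (a b : ℝ) (p : ℕ) : PowerSeries ℝ :=
  PowerSeries.mk fun m =>
    if p ∣ m then
      ((m / p * (p + 1) + 1).choose (m / p) : ℝ) / (m / p * (p + 1) + 1)
        * b ^ (m / p) / a ^ ((p + 1) * (m / p))
    else 0

lemma coeff_fussComposed {a b : ℝ} {p : ℕ} (ha : a ≠ 0) (hp : 1 ≤ p) (m : ℕ) :
    coeff m (fussComposed a b p) =
      if p ∣ m then fcT (p+1) (m/p) 1 * (b / a^(p+1))^(m/p) else 0 := by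
  have hp0 : p ≠ 0 := by omega
  have hpR : (p : ℝ) ≠ 0 := Nat.cast_ne_zero.2 hp0
  rw [fussComposed, coeff_mk]
  split_ifs with h
  · obtain ⟨k, rfl⟩ := h
    rw [Nat.mul_div_cancel_left k (Nat.pos_of_ne_zero hp0)]
    have hmp : ((p * k : ℕ) : ℝ) / (p : ℝ) = (k : ℝ) := by push_cast; field_simp
    rw [hmp]
    set n := k with hn
    rw [div_pow, ← pow_mul]
    rcases eq_or_ne n 0 with rfl | hn0
    · simp [fcT]
      norm_num
    · rw [fcT, if_neg hn0]
      have hd : ((n : ℝ) * (↑p + 1) + 1) ≠ 0 := by positivity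
      have hd2 : ((p:ℝ) + 1) * n + 1 ≠ 0 := by positivity
      have hch : ((p+1) * n + 1 : ℕ) = n * (p + 1) + 1 := by ring
      rw [hch]
      have hpow : a ^ ((p+1) * n) ≠ 0 := pow_ne_zero _ ha
      push_cast
      field_simp
  · rfl

lemma coeff_pow_fussComposed {a b : ℝ} {p : ℕ} (ha : a ≠ 0) (hp : 1 ≤ p) :
    ∀ (s m : ℕ), coeff m ((fussComposed a b p) ^ s) =
      if p ∣ m then fcT (p+1) (m/p) s * (b / a^(p+1))^(m/p) else 0 := by
  have hp0 : 0 < p := hp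
  have hq : 2 ≤ p + 1 := by omega
  intro s
  induction s with
  | zero =>
    intro m
    rw [pow_zero, coeff_one]
    rcases eq_or_ne m 0 with rfl | hm
    · simp [fcT_zero]
    · rw [if_neg hm]
      split_ifs with h
      · rw [fcT_s_zero _ (by
          rcases h with ⟨k, rfl⟩
          rw [Nat.mul_div_cancel_left k hp0]
          rintro rfl; exact hm (by simp)), zero_mul]
      · rfl
  | succ s IH =>
    intro m
    rw [pow_succ, coeff_mul]
    have hterm : ∀ ij ∈ antidiagonal m,
        coeff ij.1 ((fussComposed a b p) ^ s) * coeff ij.2 (fussComposed a b p) =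
        (if p ∣ ij.1 then fcT (p+1) (ij.1/p) s * (b / a^(p+1))^(ij.1/p) else 0) *
        (if p ∣ ij.2 then fcT (p+1) (ij.2/p) 1 * (b / a^(p+1))^(ij.2/p) else 0) := by
      intro ij _; rw [IH, coeff_fussComposed ha hp]
    rw [Finset.sum_congr rfl hterm]
    split_ifs with h
    · obtain ⟨k, rfl⟩ := h
      rw [Nat.mul_div_cancel_left k hp0]
      have hsub : (antidiagonal k).image (fun uv : ℕ × ℕ => (p * uv.1, p * uv.2)) ⊆
          antidiagonal (p * k) := by
        intro x hx
        simp only [Finset.mem_image, Finset.HasAntidiagonal.mem_antidiagonal] at hx ⊢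
        obtain ⟨⟨u, v⟩, huv, rfl⟩ := hx
        simp only [Finset.HasAntidiagonal.mem_antidiagonal] at huv
        simp [← Nat.mul_add, huv]
      have hzero : ∀ x ∈ antidiagonal (p * k),
          x ∉ (antidiagonal k).image (fun uv : ℕ × ℕ => (p * uv.1, p * uv.2)) →
          (if p ∣ x.1 then fcT (p+1) (x.1/p) s * (b / a^(p+1))^(x.1/p) else 0) *
          (if p ∣ x.2 then fcT (p+1) (x.2/p) 1 * (b / a^(p+1))^(x.2/p) else 0) = 0 := by
        rintro ⟨i, j⟩ hx hnot
        by_cases hi : p ∣ i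
        · by_cases hj : p ∣ j
          · exfalso; apply hnot
            simp only [Finset.mem_image, Finset.HasAntidiagonal.mem_antidiagonal] at hx ⊢
            refine ⟨(i/p, j/p), ?_, ?_⟩
            · have : p * (i/p) + p * (j/p) = p * k := by
                rw [Nat.mul_div_cancel' hi, Nat.mul_div_cancel' hj]; exact hx
              exact Nat.eq_of_mul_eq_mul_left hp0 (by rw [Nat.mul_add]; exact this)
            · simp [Nat.mul_div_cancel' hi, Nat.mul_div_cancel' hj]
          · rw [if_neg hj, mul_zero]
        · rw [if_neg hi, zero_mul]
      rw [← Finset.sum_subset hsub hzero]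
      rw [Finset.sum_image (by
        intro x _ y _ hxy
        simp only [Prod.mk.injEq] at hxy
        exact Prod.ext (Nat.eq_of_mul_eq_mul_left hp0 hxy.1)
          (Nat.eq_of_mul_eq_mul_left hp0 hxy.2))]
      have hterm2 : ∀ uv ∈ antidiagonal k,
          (if p ∣ p * uv.1 then fcT (p+1) ((p*uv.1)/p) s * (b / a^(p+1))^((p*uv.1)/p) else 0) *
          (if p ∣ p * uv.2 then fcT (p+1) ((p*uv.2)/p) 1 * (b / a^(p+1))^((p*uv.2)/p) else 0) =
          (fcT (p+1) uv.1 s * fcT (p+1) uv.2 1) * (b / a^(p+1))^k := by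
        rintro ⟨u, v⟩ huv
        simp only [Finset.HasAntidiagonal.mem_antidiagonal] at huv
        rw [if_pos (dvd_mul_right p u), if_pos (dvd_mul_right p v),
          Nat.mul_div_cancel_left u hp0, Nat.mul_div_cancel_left v hp0, ← huv, pow_add]
        ring
      rw [Finset.sum_congr rfl hterm2, ← Finset.sum_mul, fcT_conv hq]
    · apply Finset.sum_eq_zero
      rintro ⟨i, j⟩ hx
      simp only [Finset.HasAntidiagonal.mem_antidiagonal] at hx
      by_cases hi : p ∣ i
      · by_cases hj : p ∣ j
        · exact absurd (hx ▸ dvd_add hi hj) h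
        · rw [if_neg hj, mul_zero]
      · rw [if_neg hi, zero_mul]

lemma fussComposed_feq {a b : ℝ} {p : ℕ} (ha : a ≠ 0) (hp : 1 ≤ p) :
    fussComposed a b p - PowerSeries.C (b / a^(p+1)) * X^p * (fussComposed a b p)^(p+1) = 1 := by
  have hp0 : 0 < p := hp
  ext m
  rw [map_sub, coeff_one, mul_assoc, coeff_C_mul, coeff_X_pow_mul',
    coeff_fussComposed ha hp, coeff_pow_fussComposed ha hp]
  rcases eq_or_ne m 0 with rfl | hm
  · rw [if_pos rfl, if_pos (dvd_zero p), if_neg (by omega), Nat.zero_div, fcT_zero]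
    norm_num
  · rw [if_neg hm]
    by_cases h : p ∣ m
    · obtain ⟨k, rfl⟩ := h
      have hk : k ≠ 0 := by rintro rfl; exact hm (by simp)
      have hle : p ≤ p * k := Nat.le_mul_of_pos_right p (Nat.pos_of_ne_zero hk)
      obtain ⟨k', rfl⟩ : ∃ k', k = k' + 1 := ⟨k - 1, by omega⟩
      rw [if_pos (dvd_mul_right p (k' + 1)), if_pos hle,
        Nat.mul_div_cancel_left (k' + 1) hp0]
      have hsub : p * (k' + 1) - p = p * k' := by rw [Nat.mul_succ, Nat.add_sub_cancel]
      rw [hsub, if_pos (dvd_mul_right p k'), Nat.mul_div_cancel_left k' hp0]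
      have hr : fcT (p+1) (k'+1) 1 = fcT (p+1) k' (p+1) := by
        have hh := raney (q := p + 1) (by omega) k' 0
        rw [fcT_s_zero _ (Nat.succ_ne_zero k')] at hh
        simpa using hh
      rw [hr, pow_succ]
      ring
    · rw [if_neg h]
      have hz : (if p ≤ m then (if p ∣ m - p then
          fcT (p+1) ((m-p)/p) (p+1) * (b/a^(p+1))^((m-p)/p) else 0) else 0) = 0 := by
        split_ifs with h1 h2
        · exact absurd (by
            have : m = (m - p) + p := by omega
            rw [this]; exact dvd_add h2 dvd_rfl) h
        · rfl
        · rfl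
      rw [hz, mul_zero, sub_zero]

/-- If `f` is the compositional inverse of `g(x) = a x - b x^{p+1}` (so `f(0) = 0` and
`g(f(x)) = a f(x) - b f(x)^{p+1} = x`), then `a f(x) = x ⬝ B_{p+1}(b x^p / a^{p+1})`. -/
theorem stmt_5 (a b : ℝ) (p : ℕ) (ha : a ≠ 0) (hp : 1 ≤ p) (f : PowerSeries ℝ)
    (hf0 : PowerSeries.constantCoeff f = 0)
    (hinv : PowerSeries.C a * f - PowerSeries.C b * f ^ (p + 1) = PowerSeries.X) :
    PowerSeries.C a * f = PowerSeries.X * fussComposed a b p := by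
  set F := fussComposed a b p with hFdef
  set g : PowerSeries ℝ := PowerSeries.C a⁻¹ * (PowerSeries.X * F) with hgdef
  have hF : F - PowerSeries.C (b / a^(p+1)) * X^p * F^(p+1) = 1 := fussComposed_feq ha hp
  have h1 : PowerSeries.C a * g = PowerSeries.X * F := by
    rw [hgdef, ← mul_assoc, ← map_mul, mul_inv_cancel₀ ha, map_one, one_mul]
  have hg0 : PowerSeries.constantCoeff g = 0 := by
    rw [hgdef]; simp
  have hginv : PowerSeries.C a * g - PowerSeries.C b * g ^ (p + 1) = PowerSeries.X := by
    have h2 : PowerSeries.C b * g ^ (p + 1) =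
        PowerSeries.C (b / a^(p+1)) * X^p * F^(p+1) * X := by
      rw [hgdef, mul_pow, mul_pow, ← map_pow, ← mul_assoc, ← map_mul]
      rw [show b * a⁻¹ ^ (p+1) = b / a^(p+1) by rw [inv_pow, div_eq_mul_inv]]
      rw [pow_succ]
      ring
    rw [h1, h2]
    calc PowerSeries.X * F - PowerSeries.C (b / a^(p+1)) * X^p * F^(p+1) * X
        = (F - PowerSeries.C (b / a^(p+1)) * X^p * F^(p+1)) * X := by ring
      _ = PowerSeries.X := by rw [hF, one_mul]
  -- uniqueness
  have hd : ∀ n, coeff n (f - g) = 0 := by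
    intro n
    induction n using Nat.strong_induction_on with
    | _ n IH =>
      set S : PowerSeries ℝ :=
        PowerSeries.C b * ∑ i ∈ Finset.range (p+1), f^i * g^(p - i) with hSdef
      have heq : PowerSeries.C a * (f - g) = S * (f - g) := by
        have hgeom := geom_sum₂_mul f g (p+1)
        have hexp : ∀ i ∈ Finset.range (p+1), f^i * g^(p+1-1-i) = f^i * g^(p-i) := by
          intro i hi; norm_num
        rw [Finset.sum_congr rfl hexp] at hgeom
        calc PowerSeries.C a * (f - g)
            = (PowerSeries.C a * f - PowerSeries.C b * f^(p+1))
              - (PowerSeries.C a * g - PowerSeries.C b * g^(p+1))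
              + PowerSeries.C b * (f^(p+1) - g^(p+1)) := by ring
          _ = PowerSeries.C b * (f^(p+1) - g^(p+1)) := by rw [hinv, hginv]; ring
          _ = S * (f - g) := by rw [← hgeom, hSdef]; ring
      have hS0 : PowerSeries.constantCoeff S = 0 := by
        rw [hSdef, map_mul, map_sum]
        have hterm : ∀ i ∈ Finset.range (p+1),
            PowerSeries.constantCoeff (f^i * g^(p-i)) = 0 := by
          intro i hi
          rw [map_mul, map_pow, map_pow, hf0, hg0]
          rcases Nat.eq_zero_or_pos i with rfl | hi0
          · rw [zero_pow (by omega : p - 0 ≠ 0), mul_zero]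
          · rw [zero_pow hi0.ne', zero_mul]
        rw [Finset.sum_congr rfl hterm]
        simp
      have hco := congrArg (coeff n) heq
      rw [coeff_C_mul, coeff_mul] at hco
      have hsum : ∑ ij ∈ Finset.HasAntidiagonal.antidiagonal n, coeff ij.1 S * coeff ij.2 (f - g) = 0 := by
        apply Finset.sum_eq_zero
        rintro ⟨i, j⟩ hij
        rw [Finset.HasAntidiagonal.mem_antidiagonal] at hij
        rcases lt_or_eq_of_le (show j ≤ n by omega) with hj | rfl
        · rw [IH j hj, mul_zero]
        · have hi0 : i = 0 := by omega
          rw [hi0, coeff_zero_eq_constantCoeff, hS0, zero_mul]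
      rw [hsum] at hco
      exact (mul_eq_zero.mp hco).resolve_left ha
  have hfg : f = g := by
    have : f - g = 0 := PowerSeries.ext fun n => by rw [hd n, map_zero]
    exact sub_eq_zero.mp this
  rw [hfg, h1]
end

section
/- Let f(x) be the formal power series satisfying a·f(x) = x + b·f(x)^{p+1} with f(0) = 0 and f'(0) = 1/a (a ≠ 0, p ≥ 1). Then exp(t·f(x)) = Σ_{n≥0} w_n(t) x^n / n!, where w_0(t) = 1 and w_n(t) = Σ_{j=0}^{⌊(n-1)/p⌋} ((n+j-1)! b^j)/(j!(n-jp-1)! a^{n+j}) t^{n-jp} for n ≥ 1. -/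
open PowerSeries

noncomputable def cc (a b : ℝ) (p n k : ℕ) : ℝ :=
  if k = 0 then (if n = 0 then 1 else 0)
  else if n < k then 0
  else if p ∣ (n - k) then
    (k : ℝ) / n * (Nat.choose (n + (n-k)/p - 1) ((n-k)/p) : ℝ) * b ^ ((n-k)/p)
      / a ^ (n + (n-k)/p)
  else 0

lemma cc_of_lt (a b : ℝ) (p n k : ℕ) (h : n < k) : cc a b p n k = 0 := by
  unfold cc
  have : k ≠ 0 := by omega
  simp [this, h]

-- key nat identity: j ≥ 1, k ≥ 1, n = k + j*p:
lemma nat_id (p n k j : ℕ) (hj : 1 ≤ j) (hk : 1 ≤ k) (hn : n = k + j * p) (hp : 1 ≤ p) :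
    (n-1) * k * Nat.choose (n+j-1) j
      = n * (k-1) * Nat.choose (n+j-2) j + (n-1) * (k+p) * Nat.choose (n+j-2) (j-1) := by
  have hn2 : 2 ≤ n := by nlinarith
  set m := n + j - 2 with hm
  have h1 : n + j - 1 = m + 1 := by omega
  have h2 : j = (j-1) + 1 := by omega
  have hpas : Nat.choose (m+1) j = Nat.choose m (j-1) + Nat.choose m j := by
    rw [h2, Nat.choose_succ_succ]
    simp
  have hrel : Nat.choose m j * j = Nat.choose m (j-1) * (n - 1) := by
    have := Nat.choose_succ_right_eq m (j-1)
    rw [← h2] at this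
    have hmj : m - (j-1) = n - 1 := by omega
    rw [this, hmj]
  rw [h1, hpas]
  have hn1 : 1 ≤ n := by omega
  zify [hk, hn1]
  zify [hn1] at hrel
  have hnz : (n : ℤ) = k + j * p := by exact_mod_cast hn
  linear_combination (m.choose j : ℤ) * hnz + (p:ℤ) * hrel

lemma cc_rec (a b : ℝ) (ha : a ≠ 0) (p : ℕ) (hp : 1 ≤ p) (n k : ℕ)
    (hk : 1 ≤ k) (hn : 1 ≤ n) :
    a * cc a b p n k = cc a b p (n-1) (k-1) + b * cc a b p n (k+p) := by
  rcases lt_or_ge n k with hlt | hge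
  · rw [cc_of_lt a b p n k hlt, cc_of_lt a b p n (k+p) (by omega),
      cc_of_lt a b p (n-1) (k-1) (by omega)]
    ring
  · by_cases hd : p ∣ n - k
    · obtain ⟨j, hj⟩ := hd
      rcases Nat.eq_zero_or_pos j with hj0 | hj1
      · -- j = 0, k = n
        subst hj0
        have hkn : k = n := by omega
        subst hkn
        have h2 : cc a b p k (k + p) = 0 := cc_of_lt _ _ _ _ _ (by omega)
        rw [h2]
        rcases Nat.eq_or_lt_of_le hn with h1 | h1
        · -- n = k = 1
          have : k = 1 := h1.symm
          subst this
          unfold cc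
          norm_num
          field_simp
        · -- k ≥ 2
          unfold cc
          have e1 : ¬ (k = 0) := by omega
          have e2 : ¬ (k < k) := by omega
          have e3 : ¬ (k - 1 = 0) := by omega
          have e4 : ¬ (k - 1 < k - 1) := by omega
          simp only [e1, e2, e3, e4, if_false, Nat.sub_self, Nat.zero_div,
            Nat.dvd_zero, if_true, pow_zero, Nat.add_zero, mul_one,
            Nat.choose_zero_right, Nat.cast_one]
          have hk0 : (k : ℝ) ≠ 0 := by positivity
          have hk1 : ((k - 1 : ℕ) : ℝ) ≠ 0 := by
            have : 0 < k - 1 := by omega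
            exact_mod_cast this.ne'
          have hak : a ^ k = a * a ^ (k-1) := by
            rw [← pow_succ']
            congr 1
            omega
          rw [div_self hk0, div_self hk1, hak]
          field_simp
          simp
      · -- j ≥ 1
        have hcomm : p * j = j * p := Nat.mul_comm p j
        have hpj : 1 ≤ p * j := Nat.mul_pos (by omega) hj1
        have hppj : p ≤ p * j := Nat.le_mul_of_pos_right p hj1
        have hn2 : 2 ≤ n := by omega
        have hkpn : k + p ≤ n := by omega
        have hq1 : (n - k) / p = j := by rw [hj]; exact Nat.mul_div_cancel_left j (by omega)
        have hmp : p * (j - 1) = p * j - p := Nat.mul_pred p j ▸ by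
          cases j with
          | zero => omega
          | succ m => simp [Nat.mul_succ]
        have hq2 : (n - (k + p)) = p * (j - 1) := by omega
        have hq3 : (n - (k + p)) / p = j - 1 := by
          rw [hq2]; exact Nat.mul_div_cancel_left _ (by omega)
        have hdvd : p ∣ n - k := ⟨j, hj⟩
        have v0 : cc a b p n k
            = (k : ℝ) / n * (Nat.choose (n + j - 1) j : ℝ) * b ^ j / a ^ (n + j) := by
          unfold cc
          rw [if_neg (by omega), if_neg (by omega), if_pos hdvd, hq1]
        have v1 : cc a b p (n-1) (k-1)
            = ((k-1 : ℕ) : ℝ) / ((n-1 : ℕ) : ℝ) * (Nat.choose (n + j - 2) j : ℝ)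
              * b ^ j / a ^ (n + j - 1) := by
          by_cases hk1 : k = 1
          · subst hk1
            unfold cc
            have hne : ¬ (n - 1 = 0) := by omega
            simp [hne]
          · unfold cc
            have hd2 : p ∣ (n-1) - (k-1) := by
              have e : (n-1)-(k-1) = n - k := by omega
              rw [e]; exact hdvd
            rw [if_neg (by omega), if_neg (by omega), if_pos hd2]
            have e5 : ((n-1) - (k-1)) / p = j := by
              have e : (n-1)-(k-1) = n-k := by omega
              rw [e, hq1]
            rw [e5, show n - 1 + j - 1 = n + j - 2 by omega,
              show n - 1 + j = n + j - 1 by omega]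
        have v2 : cc a b p n (k+p)
            = ((k+p : ℕ) : ℝ) / n * (Nat.choose (n + j - 2) (j-1) : ℝ)
              * b ^ (j-1) / a ^ (n + j - 1) := by
          unfold cc
          have hd3 : p ∣ n - (k+p) := by rw [hq2]; exact dvd_mul_right p _
          rw [if_neg (by omega), if_neg (by omega), if_pos hd3, hq3,
            show n + (j-1) - 1 = n + j - 2 by omega,
            show n + (j-1) = n + j - 1 by omega]
        rw [v0, v1, v2]
        have natid := nat_id p n k j hj1 hk (by omega) hp
        have R : ((n:ℝ)-1) * k * (Nat.choose (n+j-1) j : ℝ)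
            = (n:ℝ) * ((k:ℝ)-1) * (Nat.choose (n+j-2) j : ℝ)
              + ((n:ℝ)-1) * ((k:ℝ)+p) * (Nat.choose (n+j-2) (j-1) : ℝ) := by
          have := congrArg (Nat.cast : ℕ → ℝ) natid
          push_cast [Nat.cast_sub hk, Nat.cast_sub hn] at this
          linarith [this]
        have hn0 : (n:ℝ) ≠ 0 := by positivity
        have hn1 : (n:ℝ) - 1 ≠ 0 := by
          have : (2:ℝ) ≤ n := by exact_mod_cast hn2
          linarith
        have hbj : b ^ j = b ^ (j-1) * b := by
          rw [← pow_succ]; congr 1; omega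
        have haj : a ^ (n+j) = a ^ (n+j-1) * a := by
          rw [← pow_succ]; congr 1; omega
        rw [hbj, haj, Nat.cast_sub hk, Nat.cast_sub hn]
        push_cast
        field_simp
        linear_combination (b ^ (j-1) * b) * R
    · -- not divisible: all three zero
      have z1 : cc a b p n k = 0 := by
        unfold cc
        simp only [show ¬ (k = 0) by omega, show ¬ (n < k) by omega, if_false, hd]
      have z2 : cc a b p (n-1) (k-1) = 0 := by
        unfold cc
        by_cases hk1 : k = 1
        · subst hk1
          have hne : ¬ (n - 1 = 0) := by
            intro h
            have e : n - 1 = 0 := h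
            have : n = 1 := by omega
            subst this
            exact hd (by simpa using dvd_zero p)
          simp [hne]
        · have e1 : ¬ (k - 1 = 0) := by omega
          have e2 : ¬ (n - 1 < k - 1) := by omega
          have e3 : ¬ (p ∣ (n-1) - (k-1)) := by
            have : (n-1) - (k-1) = n - k := by omega
            rw [this]; exact hd
          simp [e1, e2, e3]
      have z3 : cc a b p n (k + p) = 0 := by
        rcases lt_or_ge n (k+p) with h | h
        · exact cc_of_lt _ _ _ _ _ h
        · unfold cc
          have e1 : ¬ (k + p = 0) := by omega
          have e2 : ¬ (n < k + p) := by omega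
          have e3 : ¬ (p ∣ n - (k+p)) := by
            intro hcon
            apply hd
            have : n - k = (n - (k+p)) + p := by omega
            rw [this]
            exact Nat.dvd_add hcon dvd_rfl
          simp [e1, e2, e3]
          omega
      rw [z1, z2, z3]
      ring


lemma coeff_pow_zero_of_lt (f : PowerSeries ℝ) (hf0 : constantCoeff f = 0)
    (n k : ℕ) (h : n < k) : coeff n (f ^ k) = 0 := by
  have hx : X ∣ f := X_dvd_iff.mpr hf0
  have hdvd : (X : PowerSeries ℝ) ^ k ∣ f ^ k := pow_dvd_pow_of_dvd hx k
  exact (X_pow_dvd_iff.mp hdvd) n h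

lemma coeff_rec (a b : ℝ) (p : ℕ) (f : PowerSeries ℝ)
    (hfe : C a * f = X + C b * f ^ (p + 1))
    (n k : ℕ) (hk : 1 ≤ k) (hn : 1 ≤ n) :
    a * coeff n (f ^ k)
      = coeff (n-1) (f ^ (k-1)) + b * coeff n (f ^ (k+p)) := by
  have h : C a * f ^ k = X * f ^ (k-1) + C b * f ^ (k+p) := by
    calc C a * f ^ k = C a * f * f ^ (k-1) := by
          rw [mul_assoc, ← pow_succ']
          congr 2
          omega
    _ = (X + C b * f ^ (p+1)) * f ^ (k-1) := by rw [hfe]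
    _ = X * f ^ (k-1) + C b * f ^ (k+p) := by
          rw [add_mul, mul_assoc, ← pow_add]
          congr 3
          omega
  have h2 := congrArg (coeff n) h
  rw [map_add, coeff_C_mul, coeff_C_mul] at h2
  rw [h2]
  congr 1
  rw [show n = (n-1)+1 by omega]
  rw [coeff_succ_X_mul]
  try (congr 2 <;> omega)

lemma coeff_eq_cc (a b : ℝ) (ha : a ≠ 0) (p : ℕ) (hp : 1 ≤ p) (f : PowerSeries ℝ)
    (hf0 : constantCoeff f = 0)
    (hfe : C a * f = X + C b * f ^ (p + 1)) :
    ∀ n k, coeff n (f ^ k) = cc a b p n k := by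
  intro n
  induction n using Nat.strong_induction_on with
  | _ n ih =>
    have inner : ∀ d k, n ≤ k + d → coeff n (f ^ k) = cc a b p n k := by
      intro d
      induction d with
      | zero =>
        intro k hkd
        rcases lt_or_eq_of_le (by omega : n ≤ k) with hlt | heq
        · rw [coeff_pow_zero_of_lt f hf0 n k hlt, cc_of_lt a b p n k hlt]
        · subst heq
          rcases Nat.eq_zero_or_pos n with h0 | h1
          · subst h0
            simp [cc]
          · have hrec := coeff_rec a b p f hfe n n h1 h1
            have e1 : coeff (n-1) (f ^ (n-1)) = cc a b p (n-1) (n-1) :=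
              ih (n-1) (by omega) (n-1)
            have e2 : coeff n (f ^ (n+p)) = 0 :=
              coeff_pow_zero_of_lt f hf0 n (n+p) (by omega)
            have e3 : cc a b p n (n+p) = 0 := cc_of_lt a b p n (n+p) (by omega)
            have hrec2 := cc_rec a b ha p hp n n h1 h1
            rw [e1, e2] at hrec
            rw [e3] at hrec2
            have : a * coeff n (f ^ n) = a * cc a b p n n := by
              rw [hrec, hrec2]
            exact mul_left_cancel₀ ha this
      | succ d ihd =>
        intro k hkd
        rcases le_or_gt n (k + d) with hle | hgt
        · exact ihd k hle
        · have hnk : n = k + d + 1 := by omega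
          rcases Nat.eq_zero_or_pos k with h0 | h1
          · subst h0
            have : coeff n ((1 : PowerSeries ℝ)) = 0 := by
              rw [coeff_one]
              simp [show n ≠ 0 by omega]
            rw [pow_zero, this]
            unfold cc
            simp [show n ≠ 0 by omega]
          · have hn1 : 1 ≤ n := by omega
            have hrec := coeff_rec a b p f hfe n k h1 hn1
            have e1 : coeff (n-1) (f ^ (k-1)) = cc a b p (n-1) (k-1) :=
              ih (n-1) (by omega) (k-1)
            have e2 : coeff n (f ^ (k+p)) = cc a b p n (k+p) :=
              ihd (k+p) (by omega)
            have hrec2 := cc_rec a b ha p hp n k h1 hn1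
            rw [e1, e2] at hrec
            have : a * coeff n (f ^ k) = a * cc a b p n k := by
              rw [hrec, hrec2]
            exact mul_left_cancel₀ ha this
    intro k
    exact inner n k (by omega)


/-- If `a f(x) = x + b f(x)^{p+1}`, `f(0) = 0`, `f'(0) = 1/a`, then
`exp (t f(x)) = ∑ w_n(t) x^n / n!`; since `f` has zero constant term, the `n`-th
coefficient of `exp (t f(x)) = ∑_k t^k f(x)^k / k!` is `∑_{k ≤ n} t^k/k! ⬝ [x^n] f^k`. -/
theorem stmt_6 (a b : ℝ) (p : ℕ) (ha : a ≠ 0) (hp : 1 ≤ p) (f : PowerSeries ℝ)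
    (hf0 : PowerSeries.constantCoeff f = 0)
    (hf1 : PowerSeries.coeff 1 f = 1 / a)
    (hfe : PowerSeries.C a * f = PowerSeries.X + PowerSeries.C b * f ^ (p + 1))
    (t : ℝ) (n : ℕ) :
    ∑ k ∈ Finset.range (n + 1), t ^ k / k.factorial * PowerSeries.coeff n (f ^ k)
      = w a b p n t / n.factorial := by
  have hcc := coeff_eq_cc a b ha p hp f hf0 hfe
  simp only [hcc]
  rcases Nat.eq_zero_or_pos n with hn | hn
  · subst hn
    simp [cc, w]
  · have hn1 : n ≠ 0 := by omega
    set S := Finset.range ((n-1)/p + 1) with hS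
    have hbound : ∀ j ∈ S, j * p ≤ n - 1 := by
      intro j hj
      rw [hS, Finset.mem_range] at hj
      exact (Nat.le_div_iff_mul_le (by omega)).mp (by omega)
    -- step 1: restrict the sum
    have himg : (S.image (fun j => n - j * p)) ⊆ Finset.range (n+1) := by
      intro x hx
      rw [Finset.mem_image] at hx
      obtain ⟨j, hj, rfl⟩ := hx
      rw [Finset.mem_range]
      omega
    have hzero : ∀ x ∈ Finset.range (n+1), x ∉ S.image (fun j => n - j * p) →
        t ^ x / (x.factorial : ℝ) * cc a b p n x = 0 := by
      intro x hx hnx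
      have hcz : cc a b p n x = 0 := by
        unfold cc
        rw [Finset.mem_range] at hx
        by_cases h0 : x = 0
        · simp [h0, hn1]
        · rw [if_neg h0, if_neg (by omega)]
          by_cases hd : p ∣ n - x
          · exfalso
            obtain ⟨j, hj⟩ := hd
            have hc : p * j = j * p := Nat.mul_comm p j
            apply hnx
            rw [Finset.mem_image]
            refine ⟨j, ?_, by omega⟩
            rw [hS, Finset.mem_range]
            have : j * p ≤ n - 1 := by omega
            have := (Nat.le_div_iff_mul_le (show 0 < p by omega)).mpr this
            omega
          · rw [if_neg hd]
      rw [hcz, mul_zero]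
    have hinj : ∀ x ∈ S, ∀ y ∈ S, n - x * p = n - y * p → x = y := by
      intro x hx y hy hxy
      have h1 := hbound x hx
      have h2 := hbound y hy
      have : x * p = y * p := by omega
      exact Nat.eq_of_mul_eq_mul_right (by omega) this
    rw [← Finset.sum_subset himg hzero, Finset.sum_image hinj]
    -- step 2: unfold w and distribute the division
    rw [w, if_neg hn1, Finset.sum_div]
    apply Finset.sum_congr rfl
    intro j hj
    have hjp : j * p ≤ n - 1 := hbound j hj
    set k := n - j * p with hk
    have hk1 : 1 ≤ k := by omega
    have hkn : k ≤ n := by omega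
    have hnk : n - k = j * p := by omega
    have hccv : cc a b p n k
        = (k : ℝ) / n * (Nat.choose (n + j - 1) j : ℝ) * b ^ j / a ^ (n + j) := by
      unfold cc
      rw [if_neg (by omega), if_neg (by omega), if_pos (hnk ▸ dvd_mul_left p j), hnk,
        Nat.mul_div_cancel j (show 0 < p by omega)]
    rw [hccv]
    have hC : ((n + j - 1).factorial : ℝ)
        = (Nat.choose (n + j - 1) j : ℝ) * (j.factorial : ℝ) * ((n-1).factorial : ℝ) := by
      have := Nat.choose_mul_factorial_mul_factorial (show j ≤ n + j - 1 by omega)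
      have e : n + j - 1 - j = n - 1 := by omega
      rw [e] at this
      exact_mod_cast this.symm
    have hkf : (k.factorial : ℝ) = (k : ℝ) * ((k-1).factorial : ℝ) := by
      have : k.factorial = k * (k-1).factorial := by
        conv_lhs => rw [show k = (k-1)+1 by omega]
        rw [Nat.factorial_succ]
        congr 1
        omega
      exact_mod_cast this
    have hnf : (n.factorial : ℝ) = (n : ℝ) * ((n-1).factorial : ℝ) := by
      have : n.factorial = n * (n-1).factorial := by
        conv_lhs => rw [show n = (n-1)+1 by omega]
        rw [Nat.factorial_succ]
        congr 1
        omega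
      exact_mod_cast this
    have e2 : n - j * p - 1 = k - 1 := by omega
    rw [e2, hC, hkf, hnf]
    have h1 : (k : ℝ) ≠ 0 := by positivity
    have h2 : (n : ℝ) ≠ 0 := by positivity
    have h3 : ((k-1).factorial : ℝ) ≠ 0 := by positivity
    have h4 : ((n-1).factorial : ℝ) ≠ 0 := by positivity
    have h5 : (j.factorial : ℝ) ≠ 0 := by positivity
    have h6 : a ^ (n + j) ≠ 0 := pow_ne_zero _ ha
    field_simp
end

section
/- For s, t > 0, the convolution of the inverse Gaussian densities ρ_s and ρ_t equals ρ_{s+t}, where ρ_t(u) = t·exp(−(u−t)²/(2u))/√(2πu³) on (0,∞); i.e., the measures μ_t = ρ_t(u) du form a convolution semigroup. -/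
open Real MeasureTheory Set
open scoped ENNReal

/-- The inverse Gaussian density with both parameters equal to `t`, extended by `0`
outside `(0, ∞)`. -/
noncomputable def ρ (t u : ℝ) : ℝ :=
  if 0 < u then t * Real.exp (-(u - t) ^ 2 / (2 * u)) / Real.sqrt (2 * π * u ^ 3) else 0

/-- The inverse Gaussian measure `μ_t = ρ_t(u) du`. -/
noncomputable def μ (t : ℝ) : Measure ℝ :=
  volume.withDensity fun u => ENNReal.ofReal (ρ t u)

noncomputable def yf (s t u x : ℝ) : ℝ :=
  (s * u - (s + t) * x) / Real.sqrt (u * x * (u - x))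

noncomputable def Df (s t u x : ℝ) : ℝ :=
  -(u ^ 2 * (s * (u - x) + t * x)) / (2 * (u * x * (u - x)) * Real.sqrt (u * x * (u - x)))

noncomputable def Hf (s t u z : ℝ) : ℝ :=
  Real.exp (s + t - u / 2) / (2 * π * (u * Real.sqrt u)) *
    (((s + t) + z / Real.sqrt (z ^ 2 + 4 * s * t / u) * (t - s)) *
      Real.exp (-(((s + t) ^ 2 / u + z ^ 2) / 2)))

noncomputable def psi (s t u z : ℝ) : ℝ :=
  u ^ 2 * (Real.sqrt (z ^ 2 + 4 * s * t / u) - z) ^ 2 /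
    (4 * t ^ 2 + u * (Real.sqrt (z ^ 2 + 4 * s * t / u) - z) ^ 2)

lemma rho_nonneg {t : ℝ} (ht : 0 ≤ t) (u : ℝ) : 0 ≤ ρ t u := by
  unfold ρ
  split
  · positivity
  · exact le_refl 0

lemma measurable_rho (t : ℝ) : Measurable (ρ t) := by
  unfold ρ
  apply Measurable.ite (measurableSet_lt measurable_const measurable_id)
  · fun_prop
  · fun_prop

lemma yf_hasDerivAt {s t u x : ℝ} (hx : 0 < x) (hxu : x < u) :
    HasDerivAt (yf s t u) (Df s t u x) x := by
  have hu : 0 < u := hx.trans hxu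
  have hux : 0 < u - x := by linarith
  have hw : 0 < u * x * (u - x) := by positivity
  have hr : 0 < Real.sqrt (u * x * (u - x)) := Real.sqrt_pos.2 hw
  have h1 : HasDerivAt (fun y => u * y * (u - y)) (u * (u - x) + u * x * (0 - 1)) x := by
    have := ((hasDerivAt_id x).const_mul u).mul ((hasDerivAt_const x u).sub (hasDerivAt_id x))
    exact this.congr_deriv (by simp)
  have h2 : HasDerivAt (fun y => Real.sqrt (u * y * (u - y)))
      ((u * (u - x) + u * x * (0 - 1)) / (2 * Real.sqrt (u * x * (u - x)))) x := by
    have := (Real.hasDerivAt_sqrt (ne_of_gt hw)).comp x h1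
    exact this.congr_deriv (by ring)
  have h3 : HasDerivAt (fun y => s * u - (s + t) * y) (0 - (s + t) * 1) x :=
    (hasDerivAt_const x (s * u)).sub ((hasDerivAt_id x).const_mul (s + t))
  have h4 := h3.div h2 (ne_of_gt hr)
  have hE : yf s t u = fun y => (s * u - (s + t) * y) / Real.sqrt (u * y * (u - y)) := rfl
  rw [hE]
  refine (h4.congr_deriv ?_).congr_deriv rfl; symm
  set r := Real.sqrt (u * x * (u - x)) with hrdef
  have hr2 : r ^ 2 = u * x * (u - x) := Real.sq_sqrt hw.le
  rw [Df, ← hrdef, hr2]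
  field_simp
  linear_combination (2 * (s + t)) * hr2

lemma yf_image {s t u : ℝ} (hs : 0 < s) (ht : 0 < t) (hu : 0 < u) :
    yf s t u '' Set.Ioo 0 u = Set.univ := by
  apply Set.eq_univ_of_forall
  intro z
  set Y := Real.sqrt (z ^ 2 + 4 * s * t / u) with hYdef
  have hY2 : Y ^ 2 = z ^ 2 + 4 * s * t / u := Real.sq_sqrt (by positivity)
  have hY2' : u * Y ^ 2 = u * z ^ 2 + 4 * s * t := by rw [hY2]; field_simp
  have hYpos : 0 ≤ Y := Real.sqrt_nonneg _
  have hzY : z < Y := by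
    by_contra h
    push_neg at h
    have h2 : Y ^ 2 ≤ z ^ 2 := by nlinarith
    have h4 : 0 < 4 * s * t / u := by positivity
    linarith [hY2]
  set q := Y - z with hqdef
  have hq : 0 < q := sub_pos.2 hzY
  set Δ := 4 * t ^ 2 + u * q ^ 2 with hΔdef
  have hΔ : 0 < Δ := by positivity
  set x := u ^ 2 * q ^ 2 / Δ with hxdef
  have hx : 0 < x := by positivity
  have ht2u : 0 < t ^ 2 * u := by positivity
  have hxu : x < u := by
    rw [hxdef, div_lt_iff₀ hΔ, hΔdef]
    nlinarith
  refine ⟨x, ⟨hx, hxu⟩, ?_⟩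
  have hux : u - x = 4 * t ^ 2 * u / Δ := by
    rw [hxdef, hΔdef]
    field_simp
    ring
  have hwr : Real.sqrt (u * x * (u - x)) = 2 * u ^ 2 * t * q / Δ := by
    rw [hux, hxdef]
    rw [show u * (u ^ 2 * q ^ 2 / Δ) * (4 * t ^ 2 * u / Δ) = (2 * u ^ 2 * t * q / Δ) ^ 2 by
      field_simp; ring]
    exact Real.sqrt_sq (by positivity)
  have key : s * Δ - (s + t) * u * q ^ 2 = 2 * u * t * z * q := by
    rw [hΔdef, hqdef]
    linear_combination (-t) * hY2'
  rw [yf, hwr]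
  rw [div_eq_iff (by positivity), hxdef]
  field_simp
  linear_combination u * key + (u-1)*t*hY2'

lemma sqrt_ytilde {s t u x : ℝ} (hs : 0 < s) (ht : 0 < t) (hx : 0 < x) (hxu : x < u) :
    Real.sqrt ((yf s t u x) ^ 2 + 4 * s * t / u)
      = (s * (u - x) + t * x) / Real.sqrt (u * x * (u - x)) := by
  have hu : 0 < u := hx.trans hxu
  have hux : 0 < u - x := by linarith
  have hw : 0 < u * x * (u - x) := by positivity
  have hr2 : Real.sqrt (u * x * (u - x)) ^ 2 = u * x * (u - x) := Real.sq_sqrt hw.le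
  have hr : 0 < Real.sqrt (u * x * (u - x)) := Real.sqrt_pos.2 hw
  have hP : 0 < s * (u - x) + t * x := by positivity
  have h1 : (yf s t u x) ^ 2 + 4 * s * t / u
      = ((s * (u - x) + t * x) / Real.sqrt (u * x * (u - x))) ^ 2 := by
    rw [yf, div_pow, div_pow, hr2]
    field_simp
    ring
  rw [h1, Real.sqrt_sq (by positivity)]

lemma psi_yf {s t u x : ℝ} (hs : 0 < s) (ht : 0 < t) (hx : 0 < x) (hxu : x < u) :
    psi s t u (yf s t u x) = x := by
  have hu : 0 < u := hx.trans hxu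
  have hux : 0 < u - x := by linarith
  have hw : 0 < u * x * (u - x) := by positivity
  have hr : 0 < Real.sqrt (u * x * (u - x)) := Real.sqrt_pos.2 hw
  have hr2 : Real.sqrt (u * x * (u - x)) ^ 2 = u * x * (u - x) := Real.sq_sqrt hw.le
  have hq : Real.sqrt ((yf s t u x) ^ 2 + 4 * s * t / u) - yf s t u x
      = 2 * t * x / Real.sqrt (u * x * (u - x)) := by
    rw [sqrt_ytilde hs ht hx hxu, yf, div_sub_div_same]
    congr 1
    ring
  rw [psi, hq]
  rw [div_pow, hr2]
  field_simp
  ring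

lemma yf_injOn {s t u : ℝ} (hs : 0 < s) (ht : 0 < t) :
    Set.InjOn (yf s t u) (Set.Ioo 0 u) := by
  intro a ha b hb hab
  have := congrArg (psi s t u) hab
  rwa [psi_yf hs ht ha.1 ha.2, psi_yf hs ht hb.1 hb.2] at this

lemma pointwise_eq {s t u x : ℝ} (hs : 0 < s) (ht : 0 < t) (hx : 0 < x) (hxu : x < u) :
    ρ s x * ρ t (u - x) = |Df s t u x| * Hf s t u (yf s t u x) := by
  have hu : 0 < u := hx.trans hxu
  have hux : 0 < u - x := by linarith
  have hw : 0 < u * x * (u - x) := by positivity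
  have hr : 0 < Real.sqrt (u * x * (u - x)) := Real.sqrt_pos.2 hw
  have hr2 : Real.sqrt (u * x * (u - x)) ^ 2 = u * x * (u - x) := Real.sq_sqrt hw.le
  have hP : 0 < s * (u - x) + t * x := by positivity
  have ha : 0 < Real.sqrt x := Real.sqrt_pos.2 hx
  have hb : 0 < Real.sqrt (u - x) := Real.sqrt_pos.2 hux
  have he : 0 < Real.sqrt u := Real.sqrt_pos.2 hu
  have hd : 0 < Real.sqrt (2 * π) := Real.sqrt_pos.2 (by positivity)
  have hd2 : Real.sqrt (2 * π) * Real.sqrt (2 * π) = 2 * π := Real.mul_self_sqrt (by positivity)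
  have he2 : Real.sqrt u * Real.sqrt u = u := Real.mul_self_sqrt hu.le
  have hsx : Real.sqrt (2 * π * x ^ 3) = Real.sqrt (2 * π) * (x * Real.sqrt x) := by
    rw [show (2 * π * x ^ 3 : ℝ) = (2 * π) * (x ^ 2 * x) by ring,
      Real.sqrt_mul (by positivity), Real.sqrt_mul (sq_nonneg x), Real.sqrt_sq hx.le]
  have hsv : Real.sqrt (2 * π * (u - x) ^ 3)
      = Real.sqrt (2 * π) * ((u - x) * Real.sqrt (u - x)) := by
    rw [show (2 * π * (u - x) ^ 3 : ℝ) = (2 * π) * ((u - x) ^ 2 * (u - x)) by ring,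
      Real.sqrt_mul (by positivity), Real.sqrt_mul (sq_nonneg _), Real.sqrt_sq hux.le]
  have hru : Real.sqrt (u * x * (u - x))
      = Real.sqrt u * Real.sqrt x * Real.sqrt (u - x) := by
    rw [Real.sqrt_mul (by positivity), Real.sqrt_mul hu.le]
  have hρ1 : ρ s x = s * Real.exp (-(x - s) ^ 2 / (2 * x))
      / (Real.sqrt (2 * π) * (x * Real.sqrt x)) := by
    rw [ρ, if_pos hx, hsx]
  have hρ2 : ρ t (u - x) = t * Real.exp (-((u - x) - t) ^ 2 / (2 * (u - x)))
      / (Real.sqrt (2 * π) * ((u - x) * Real.sqrt (u - x))) := by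
    rw [ρ, if_pos hux, hsv]
  have hy2 : (yf s t u x) ^ 2 = (s * u - (s + t) * x) ^ 2 / (u * x * (u - x)) := by
    rw [yf, div_pow, hr2]
  have hexp : Real.exp (-(x - s) ^ 2 / (2 * x)) * Real.exp (-((u - x) - t) ^ 2 / (2 * (u - x)))
      = Real.exp (s + t - u / 2) * Real.exp (-(((s + t) ^ 2 / u + (yf s t u x) ^ 2) / 2)) := by
    rw [← Real.exp_add, ← Real.exp_add]
    congr 1
    rw [hy2]
    field_simp
    ring
  have hMP : yf s t u x / Real.sqrt ((yf s t u x) ^ 2 + 4 * s * t / u)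
      = (s * u - (s + t) * x) / (s * (u - x) + t * x) := by
    rw [sqrt_ytilde hs ht hx hxu, yf, div_div_div_comm, div_self hr.ne', div_one]
  have hfrac : (s + t) + (s * u - (s + t) * x) / (s * (u - x) + t * x) * (t - s)
      = 2 * s * t * u / (s * (u - x) + t * x) := by
    field_simp
    ring
  have habs : |Df s t u x| = u ^ 2 * (s * (u - x) + t * x)
      / (2 * (u * x * (u - x)) * Real.sqrt (u * x * (u - x))) := by
    rw [Df, abs_div, abs_neg, abs_of_pos (by positivity), abs_of_pos (by positivity)]
  rw [hρ1, hρ2, habs, Hf, hMP, hfrac, hru]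
  set a := Real.sqrt x with hadef
  set b := Real.sqrt (u - x) with hbdef
  set e := Real.sqrt u with hedef
  set d := Real.sqrt (2 * π) with hddef
  set E1 := Real.exp (-(x - s) ^ 2 / (2 * x)) with hE1def
  set E2 := Real.exp (-((u - x) - t) ^ 2 / (2 * (u - x))) with hE2def
  set E3 := Real.exp (s + t - u / 2) with hE3def
  set E4 := Real.exp (-(((s + t) ^ 2 / u + (yf s t u x) ^ 2) / 2)) with hE4def
  field_simp
  linear_combination (2*π*e^2) * hexp
    + (2*π*E3*E4) * he2
    + (-(u*E3*E4)) * hd2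

section
variable {s t u : ℝ}

lemma ratio_abs_le (hs : 0 < s) (ht : 0 < t) (hu : 0 < u) (z : ℝ) :
    |z / Real.sqrt (z ^ 2 + 4 * s * t / u)| ≤ 1 := by
  have hc : 0 < 4 * s * t / u := by positivity
  have h0 : 0 < Real.sqrt (z ^ 2 + 4 * s * t / u) := Real.sqrt_pos.2 (by positivity)
  rw [abs_div, abs_of_pos h0, div_le_one h0, ← Real.sqrt_sq_eq_abs]
  exact Real.sqrt_le_sqrt (by linarith)

lemma Hf_nonneg (hs : 0 < s) (ht : 0 < t) (hu : 0 < u) (z : ℝ) : 0 ≤ Hf s t u z := by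
  have h := abs_le.1 (ratio_abs_le hs ht hu z)
  apply mul_nonneg (by positivity)
  apply mul_nonneg _ (Real.exp_pos _).le
  rcases le_total s t with h' | h' <;> nlinarith [h.1, h.2]

lemma Hf_split (hs : 0 < s) (ht : 0 < t) (hu : 0 < u) :
    Hf s t u = fun z =>
      (Real.exp (s + t - u / 2) / (2 * π * (u * Real.sqrt u)) * Real.exp (-((s + t) ^ 2 / (2 * u))) * (s + t)) *
          Real.exp (-(2⁻¹ * z ^ 2)) +
        (Real.exp (s + t - u / 2) / (2 * π * (u * Real.sqrt u)) * Real.exp (-((s + t) ^ 2 / (2 * u))) * (t - s)) *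
          (z / Real.sqrt (z ^ 2 + 4 * s * t / u) * Real.exp (-(2⁻¹ * z ^ 2))) := by
  funext z
  rw [Hf, show (-(((s + t) ^ 2 / u + z ^ 2) / 2) : ℝ)
    = (-((s + t) ^ 2 / (2 * u))) + (-(2⁻¹ * z ^ 2)) by field_simp; ring, Real.exp_add]
  ring

lemma gauss_int : Integrable (fun z : ℝ => Real.exp (-(2⁻¹ * z ^ 2))) := by
  have := integrable_exp_neg_mul_sq (show (0:ℝ) < 2⁻¹ by norm_num)
  simpa [neg_mul] using this

lemma odd_cont (hs : 0 < s) (ht : 0 < t) (hu : 0 < u) :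
    Continuous (fun z : ℝ => z / Real.sqrt (z ^ 2 + 4 * s * t / u) * Real.exp (-(2⁻¹ * z ^ 2))) := by
  have hc : 0 < 4 * s * t / u := by positivity
  apply Continuous.mul _ (by continuity)
  apply Continuous.div continuous_id (Real.continuous_sqrt.comp (by continuity))
  intro z
  exact (Real.sqrt_pos.2 (by positivity)).ne'

lemma odd_int (hs : 0 < s) (ht : 0 < t) (hu : 0 < u) :
    Integrable (fun z : ℝ => z / Real.sqrt (z ^ 2 + 4 * s * t / u) * Real.exp (-(2⁻¹ * z ^ 2))) := by
  apply Integrable.mono gauss_int (odd_cont hs ht hu).aestronglyMeasurable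
  filter_upwards with z
  rw [Real.norm_eq_abs, Real.norm_eq_abs, abs_mul, abs_of_pos (Real.exp_pos _)]
  nlinarith [ratio_abs_le hs ht hu z, Real.exp_pos (-(2⁻¹ * z ^ 2)),
    abs_le.1 (ratio_abs_le hs ht hu z)]

lemma odd_zero (hs : 0 < s) (ht : 0 < t) (hu : 0 < u) :
    ∫ z : ℝ, z / Real.sqrt (z ^ 2 + 4 * s * t / u) * Real.exp (-(2⁻¹ * z ^ 2)) = 0 := by
  set g := fun z : ℝ => z / Real.sqrt (z ^ 2 + 4 * s * t / u) * Real.exp (-(2⁻¹ * z ^ 2)) with hg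
  have h1 : ∫ z : ℝ, g (-z) = ∫ z : ℝ, g z := integral_neg_eq_self g volume
  have h2 : ∀ z : ℝ, g (-z) = - g z := by
    intro z
    simp only [hg]
    rw [show (-z) ^ 2 = z ^ 2 by ring]
    ring
  rw [integral_congr_ae (Filter.Eventually.of_forall h2), integral_neg] at h1
  linarith [h1]

lemma Hf_integrable (hs : 0 < s) (ht : 0 < t) (hu : 0 < u) : Integrable (Hf s t u) := by
  rw [Hf_split hs ht hu]
  exact (gauss_int.const_mul _).add ((odd_int hs ht hu).const_mul _)

lemma Hf_integral (hs : 0 < s) (ht : 0 < t) (hu : 0 < u) :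
    ∫ z : ℝ, Hf s t u z = ρ (s + t) u := by
  rw [Hf_split hs ht hu]
  rw [integral_add (gauss_int.const_mul _) ((odd_int hs ht hu).const_mul _),
    integral_const_mul, integral_const_mul, odd_zero hs ht hu, mul_zero, add_zero]
  have : ∫ z : ℝ, Real.exp (-(2⁻¹ * z ^ 2)) = Real.sqrt (2 * π) := by
    have := integral_gaussian (2⁻¹ : ℝ)
    simp only [neg_mul] at this
    rw [this, show (π / 2⁻¹ : ℝ) = 2 * π by ring]
  rw [this, ρ, if_pos hu]
  have hsu : Real.sqrt (2 * π * u ^ 3) = Real.sqrt (2 * π) * (u * Real.sqrt u) := by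
    rw [show (2 * π * u ^ 3 : ℝ) = (2 * π) * (u ^ 2 * u) by ring,
      Real.sqrt_mul (by positivity), Real.sqrt_mul (sq_nonneg u), Real.sqrt_sq hu.le]
  rw [hsu]
  have hexp : Real.exp (s + t - u / 2) * Real.exp (-((s + t) ^ 2 / (2 * u)))
      = Real.exp (-(u - (s + t)) ^ 2 / (2 * u)) := by
    rw [← Real.exp_add]
    congr 1
    field_simp
    ring
  have hd2 : Real.sqrt (2 * π) * Real.sqrt (2 * π) = 2 * π := Real.mul_self_sqrt (by positivity)
  have he : 0 < Real.sqrt u := Real.sqrt_pos.2 hu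
  have hd : 0 < Real.sqrt (2 * π) := Real.sqrt_pos.2 (by positivity)
  set d := Real.sqrt (2 * π) with hddef
  set e := Real.sqrt u with hedef
  set E1 := Real.exp (s + t - u / 2) with hE1def
  set E2 := Real.exp (-((s + t) ^ 2 / (2 * u))) with hE2def
  set E3 := Real.exp (-(u - (s + t)) ^ 2 / (2 * u)) with hE3def
  field_simp
  linear_combination (d * d) * hexp + E3 * hd2

end

lemma lintegral_cov {S : Set ℝ} {f f' : ℝ → ℝ} (hS : MeasurableSet S)
    (hf' : ∀ x ∈ S, HasDerivWithinAt f (f' x) S x) (hf : Set.InjOn f S) (g : ℝ → ℝ≥0∞) :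
    ∫⁻ x in f '' S, g x = ∫⁻ x in S, ENNReal.ofReal |f' x| * g (f x) := by
  simpa only [ContinuousLinearMap.det_toSpanSingleton] using
    lintegral_image_eq_lintegral_abs_det_fderiv_mul volume hS
      (fun x hx => (hf' x hx).hasFDerivWithinAt) hf g

lemma rho_vanish_left {t x : ℝ} (hx : x ≤ 0) : ρ t x = 0 := by
  rw [ρ, if_neg (not_lt.2 hx)]

lemma key_lintegral {s t : ℝ} (hs : 0 < s) (ht : 0 < t) (u : ℝ) :
    ∫⁻ x, ENNReal.ofReal (ρ s x * ρ t (u - x)) = ENNReal.ofReal (ρ (s + t) u) := by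
  have hvanish : ∀ x : ℝ, x ∉ Set.Ioo 0 u → ρ s x * ρ t (u - x) = 0 := by
    intro x hx
    rw [Set.mem_Ioo, not_and_or] at hx
    rcases hx with hx | hx
    · rw [show ρ s x = 0 from rho_vanish_left (not_lt.1 hx), zero_mul]
    · rw [show ρ t (u - x) = 0 from rho_vanish_left (by push_neg at hx; linarith), mul_zero]
  rcases le_or_gt u 0 with hu | hu
  · have h0 : ∀ x : ℝ, ρ s x * ρ t (u - x) = 0 := by
      intro x
      apply hvanish
      rw [Set.mem_Ioo]
      intro ⟨h1, h2⟩
      linarith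
    simp only [h0, ENNReal.ofReal_zero, lintegral_zero, rho_vanish_left hu]
  · have hderiv : ∀ x ∈ Set.Ioo 0 u, HasDerivWithinAt (yf s t u) (Df s t u x) (Set.Ioo 0 u) x :=
      fun x hx => (yf_hasDerivAt hx.1 hx.2).hasDerivWithinAt
    calc ∫⁻ x, ENNReal.ofReal (ρ s x * ρ t (u - x))
        = ∫⁻ x in Set.Ioo 0 u, ENNReal.ofReal (ρ s x * ρ t (u - x)) := by
          rw [← lintegral_indicator measurableSet_Ioo]
          congr 1
          funext x
          by_cases hx : x ∈ Set.Ioo 0 u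
          · rw [Set.indicator_of_mem hx]
          · rw [Set.indicator_of_notMem hx, hvanish x hx, ENNReal.ofReal_zero]
      _ = ∫⁻ x in Set.Ioo 0 u,
            ENNReal.ofReal |Df s t u x| * ENNReal.ofReal (Hf s t u (yf s t u x)) := by
          apply setLIntegral_congr_fun measurableSet_Ioo
          intro x hx
          dsimp only
          rw [pointwise_eq hs ht hx.1 hx.2, ENNReal.ofReal_mul (abs_nonneg _)]
      _ = ∫⁻ z in yf s t u '' Set.Ioo 0 u, ENNReal.ofReal (Hf s t u z) :=
          (lintegral_cov measurableSet_Ioo hderiv (yf_injOn hs ht) (fun z => ENNReal.ofReal (Hf s t u z))).symm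
      _ = ∫⁻ z, ENNReal.ofReal (Hf s t u z) := by
          rw [yf_image hs ht hu, Measure.restrict_univ]
      _ = ENNReal.ofReal (∫ z, Hf s t u z) :=
          (ofReal_integral_eq_lintegral_ofReal (Hf_integrable hs ht hu)
            (Filter.Eventually.of_forall (Hf_nonneg hs ht hu))).symm
      _ = ENNReal.ofReal (ρ (s + t) u) := by rw [Hf_integral hs ht hu]

lemma indicator_mul_one {A : Set ℝ} (h : ℝ → ℝ≥0∞) (w : ℝ) :
    A.indicator h w = h w * A.indicator 1 w := by
  by_cases hw : w ∈ A <;> simp [hw]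

theorem stmt_14 (s t : ℝ) (hs : 0 < s) (ht : 0 < t) :
    (μ s).conv (μ t) = μ (s + t) := by
  have hρs := (measurable_rho s).ennreal_ofReal
  have hρt := (measurable_rho t).ennreal_ofReal
  have hρst := (measurable_rho (s + t)).ennreal_ofReal
  ext A hA
  rw [μ, μ, μ, Measure.conv, Measure.map_apply measurable_add hA,
    Measure.prod_apply (measurable_add hA)]
  have hsec : ∀ x : ℝ,
      (volume.withDensity fun v => ENNReal.ofReal (ρ t v))
          (Prod.mk x ⁻¹' ((fun p : ℝ × ℝ => p.1 + p.2) ⁻¹' A))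
        = ∫⁻ w, ENNReal.ofReal (ρ t (w - x)) * A.indicator 1 w := by
    intro x
    have hBx : (Prod.mk x ⁻¹' ((fun p : ℝ × ℝ => p.1 + p.2) ⁻¹' A))
        = (fun y : ℝ => x + y) ⁻¹' A := rfl
    have hBmeas : MeasurableSet ((fun y : ℝ => x + y) ⁻¹' A) :=
      (measurable_const.add measurable_id) hA
    rw [hBx, withDensity_apply _ hBmeas, ← lintegral_indicator hBmeas]
    have := lintegral_add_right_eq_self (μ := volume)
      (fun w => ENNReal.ofReal (ρ t (w - x)) * A.indicator 1 w) x
    rw [← this]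
    apply lintegral_congr
    intro y
    simp only [add_sub_cancel_right]
    by_cases hy : x + y ∈ A
    · rw [Set.indicator_of_mem (show y ∈ (fun y => x + y) ⁻¹' A from hy),
        Set.indicator_of_mem (show y + x ∈ A from by rwa [add_comm]), Pi.one_apply, mul_one]
    · rw [Set.indicator_of_notMem (show y ∉ (fun y => x + y) ⁻¹' A from hy),
        Set.indicator_of_notMem (show y + x ∉ A from by rwa [add_comm]), mul_zero]
  rw [lintegral_withDensity_eq_lintegral_mul volume hρs
    (measurable_measure_prodMk_left ((measurable_add hA)))]
  simp only [Pi.mul_apply]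
  calc ∫⁻ x, ENNReal.ofReal (ρ s x) *
        (volume.withDensity fun v => ENNReal.ofReal (ρ t v))
          (Prod.mk x ⁻¹' ((fun p : ℝ × ℝ => p.1 + p.2) ⁻¹' A)) ∂volume
      = ∫⁻ x, ∫⁻ w, ENNReal.ofReal (ρ s x) *
          (ENNReal.ofReal (ρ t (w - x)) * A.indicator 1 w) ∂volume ∂volume := by
        apply lintegral_congr
        intro x
        rw [hsec x, ← lintegral_const_mul' _ _ ENNReal.ofReal_ne_top]
    _ = ∫⁻ w, ∫⁻ x, ENNReal.ofReal (ρ s x) *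
          (ENNReal.ofReal (ρ t (w - x)) * A.indicator 1 w) ∂volume ∂volume := by
        apply lintegral_lintegral_swap
        apply Measurable.aemeasurable
        apply Measurable.mul
        · exact hρs.comp measurable_fst
        apply Measurable.mul
        · exact hρt.comp ((measurable_snd.sub measurable_fst))
        · exact (measurable_one.indicator hA).comp measurable_snd
    _ = ∫⁻ w, (∫⁻ x, ENNReal.ofReal (ρ s x) * ENNReal.ofReal (ρ t (w - x)) ∂volume) *
          A.indicator 1 w ∂volume := by
        apply lintegral_congr
        intro w
        rw [← lintegral_mul_const' _ _ (by
          by_cases hw : w ∈ A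
          · simp [hw]
          · simp [hw])]
        apply lintegral_congr
        intro x
        ring
    _ = ∫⁻ w, ENNReal.ofReal (ρ (s + t) w) * A.indicator 1 w ∂volume := by
        apply lintegral_congr
        intro w
        congr 1
        rw [← key_lintegral hs ht w]
        apply lintegral_congr
        intro x
        rw [ENNReal.ofReal_mul (rho_nonneg hs.le x)]
    _ = ∫⁻ w in A, ENNReal.ofReal (ρ (s + t) w) ∂volume := by
        rw [← lintegral_indicator hA]
        apply lintegral_congr
        intro w
        exact (indicator_mul_one (fun w => ENNReal.ofReal (ρ (s + t) w)) w).symm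
    _ = (volume.withDensity fun v => ENNReal.ofReal (ρ (s + t) v)) A :=
        (withDensity_apply _ hA).symm
end
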